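/- arXiv:1506.01213 — 8 statements merged into one kernel-verified Lean document; each statement's English description precedes it below -/
import Mathlib

section
/- Let σ be a countable set and let p, q be distinct probability mass functions on σ. Then the infinite product measures p^{⊗ℕ} and q^{⊗ℕ} on σ^ℕ are mutually singular. -/
section ProdSingAuxSection
open MeasureTheory Filter Topology ProbabilityTheory Finset
open scoped Classical BigOperators ENNReal

namespace ProdSingAux

variable {σ : Type*} [Countable σ] [MeasurableSpace σ] [DiscreteMeasurableSpace σ]

/-- Cylinder set given by partial constraints. -/
def cylSet (k : ℕ) (g : Fin k → Option σ) : Set (ℕ → σ) :=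
  {x | ∀ i : Fin k, ∀ c : σ, g i = some c → x (i : ℕ) = c}

lemma cylSet_measurableSet (k : ℕ) (g : Fin k → Option σ) : MeasurableSet (cylSet k g) := by
  have h : cylSet k g = ⋂ (i : Fin k), ⋂ (c : σ), {x : ℕ → σ | g i = some c → x (i : ℕ) = c} := by
    ext x; simp [cylSet]
  rw [h]
  refine MeasurableSet.iInter fun i => MeasurableSet.iInter fun c => ?_
  by_cases hg : g i = some c
  · have : {x : ℕ → σ | g i = some c → x (i : ℕ) = c}
        = (fun x : ℕ → σ => x (i : ℕ)) ⁻¹' {c} := by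
      ext x; simp [hg]
    rw [this]
    exact measurable_pi_apply _ (measurableSet_singleton c)
  · have : {x : ℕ → σ | g i = some c → x (i : ℕ) = c} = Set.univ := by
      ext x; simp [hg]
    simp [this]

lemma cylSet_measure (μ : Measure (ℕ → σ)) (r : PMF σ)
    (hμ : ∀ (k : ℕ) (ξs : Fin k → σ),
      μ {x | ∀ i : Fin k, x (i : ℕ) = ξs i} = ∏ i, r (ξs i)) :
    ∀ (n k : ℕ) (g : Fin k → Option σ),
      (Finset.univ.filter fun i => g i = none).card = n →
      μ (cylSet k g) = ∏ i, (g i).elim 1 r := by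
  intro n
  induction n with
  | zero =>
    intro k g hg
    have hall : ∀ i, ∃ c, g i = some c := by
      intro i
      rcases h : g i with _ | c
      · exfalso
        have hi : i ∈ Finset.univ.filter fun i => g i = none := by simp [h]
        rw [Finset.card_eq_zero] at hg
        simp [hg] at hi
      · exact ⟨c, rfl⟩
    choose ξ hξ using hall
    have hset : cylSet k g = {x | ∀ i : Fin k, x (i : ℕ) = ξ i} := by
      ext x
      constructor
      · intro h i; exact h i (ξ i) (hξ i)
      · intro h i c hc
        rw [hξ i] at hc
        injection hc with hc'
        rw [← hc']; exact h i
    rw [hset, hμ]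
    refine Finset.prod_congr rfl fun i _ => ?_
    rw [hξ i]; rfl
  | succ n ih =>
    intro k g hg
    have hjex : ∃ j, g j = none := by
      have : (Finset.univ.filter fun i => g i = none).Nonempty := by
        rw [← Finset.card_pos, hg]; omega
      obtain ⟨j, hj⟩ := this
      exact ⟨j, (Finset.mem_filter.mp hj).2⟩
    obtain ⟨j, hj⟩ := hjex
    have hunion : cylSet k g = ⋃ c : σ, cylSet k (Function.update g j (some c)) := by
      ext x
      constructor
      · intro hx
        refine Set.mem_iUnion.mpr ⟨x (j : ℕ), fun i c hc => ?_⟩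
        by_cases hij : i = j
        · subst hij
          rw [Function.update_self] at hc
          exact Option.some_injective _ hc
        · rw [Function.update_of_ne hij] at hc
          exact hx i c hc
      · intro hx
        obtain ⟨c₀, hc₀⟩ := Set.mem_iUnion.mp hx
        intro i c hc
        have hij : i ≠ j := by
          intro h; rw [h, hj] at hc; cases hc
        exact hc₀ i c (by rw [Function.update_of_ne hij]; exact hc)
    have hdisj : Pairwise (Function.onFun Disjoint
        fun c : σ => cylSet k (Function.update g j (some c))) := by
      intro c₁ c₂ hne
      rw [Function.onFun, Set.disjoint_left]
      intro x hx₁ hx₂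
      have h1 : x (j : ℕ) = c₁ := hx₁ j c₁ (by rw [Function.update_self])
      have h2 : x (j : ℕ) = c₂ := hx₂ j c₂ (by rw [Function.update_self])
      exact hne (h1 ▸ h2 ▸ rfl)
    have hcard : ∀ c : σ,
        (Finset.univ.filter fun i => Function.update g j (some c) i = none).card = n := by
      intro c
      have hfil : (Finset.univ.filter fun i => Function.update g j (some c) i = none)
          = (Finset.univ.filter fun i => g i = none).erase j := by
        ext i
        simp only [Finset.mem_filter, Finset.mem_erase, Finset.mem_univ, true_and,
          Function.update_apply]
        constructor
        · intro h
          by_cases hij : i = j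
          · rw [if_pos hij] at h; cases h
          · rw [if_neg hij] at h; exact ⟨hij, h⟩
        · intro ⟨hij, h⟩; rw [if_neg hij]; exact h
      rw [hfil, Finset.card_erase_of_mem (by simp [hj]), hg]
      omega
    rw [hunion, measure_iUnion hdisj fun c => cylSet_measurableSet k _]
    have hprod : ∀ c : σ,
        (∏ i, ((Function.update g j (some c)) i).elim 1 r)
          = r c * ∏ i ∈ Finset.univ.erase j, (g i).elim 1 (⇑r) := by
      intro c
      have hcomp : (fun i => ((Function.update g j (some c)) i).elim 1 ⇑r)
          = Function.update (fun i => (g i).elim 1 ⇑r) j (r c) := by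
        funext i
        by_cases hij : i = j
        · subst hij; rw [Function.update_self, Function.update_self]; rfl
        · rw [Function.update_of_ne hij, Function.update_of_ne hij]
      calc ∏ i, ((Function.update g j (some c)) i).elim 1 ⇑r
          = ∏ i, Function.update (fun i => (g i).elim 1 ⇑r) j (r c) i := by rw [hcomp]
        _ = r c * ∏ i ∈ Finset.univ \ {j}, (g i).elim 1 ⇑r :=
            Finset.prod_update_of_mem (Finset.mem_univ j) _ _
        _ = r c * ∏ i ∈ Finset.univ.erase j, (g i).elim 1 ⇑r := by
            rw [Finset.sdiff_singleton_eq_erase]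
    calc ∑' c : σ, μ (cylSet k (Function.update g j (some c)))
        = ∑' c : σ, r c * ∏ i ∈ Finset.univ.erase j, (g i).elim 1 ⇑r := by
          refine tsum_congr fun c => ?_
          rw [ih k _ (hcard c), hprod c]
      _ = (∑' c : σ, r c) * ∏ i ∈ Finset.univ.erase j, (g i).elim 1 ⇑r :=
          ENNReal.tsum_mul_right
      _ = ∏ i ∈ Finset.univ.erase j, (g i).elim 1 ⇑r := by rw [r.tsum_coe, one_mul]
      _ = (g j).elim 1 ⇑r * ∏ i ∈ Finset.univ.erase j, (g i).elim 1 ⇑r := by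
          rw [hj]; simp
      _ = ∏ i, (g i).elim 1 ⇑r :=
          Finset.mul_prod_erase Finset.univ (fun i => (g i).elim 1 ⇑r) (Finset.mem_univ j)

lemma measure_single (μ : Measure (ℕ → σ)) (r : PMF σ)
    (hμ : ∀ (k : ℕ) (ξs : Fin k → σ),
      μ {x | ∀ i : Fin k, x (i : ℕ) = ξs i} = ∏ i, r (ξs i))
    (i : ℕ) (c : σ) : μ {x | x i = c} = r c := by
  set g : Fin (i + 1) → Option σ := fun t => if (t : ℕ) = i then some c else none with hgdef
  have hset : cylSet (k := i + 1) g = {x | x i = c} := by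
    ext x
    constructor
    · intro h
      exact h (Fin.last i) c (by simp [hgdef, Fin.val_last])
    · intro h t c' hc'
      simp only [hgdef] at hc'
      split_ifs at hc' with ht
      · rw [ht, ← Option.some_injective _ hc']; exact h
      all_goals exact Option.noConfusion hc'
  have := cylSet_measure μ r hμ _ (i + 1) g rfl
  rw [hset] at this
  rw [this]
  rw [Finset.prod_eq_single (Fin.last i)]
  · simp [hgdef, Fin.val_last]
  · intro t _ ht
    have : (t : ℕ) ≠ i := fun h => ht (Fin.ext (by simp [h, Fin.val_last]))
    simp [hgdef, this]
  · simp

lemma measure_pair (μ : Measure (ℕ → σ)) (r : PMF σ)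
    (hμ : ∀ (k : ℕ) (ξs : Fin k → σ),
      μ {x | ∀ i : Fin k, x (i : ℕ) = ξs i} = ∏ i, r (ξs i))
    {i j : ℕ} (hij : i ≠ j) (c d : σ) :
    μ {x | x i = c ∧ x j = d} = r c * r d := by
  set k := max i j + 1 with hk
  have hi : i < k := by omega
  have hjk : j < k := by omega
  set i' : Fin k := ⟨i, hi⟩
  set j' : Fin k := ⟨j, hjk⟩
  set g : Fin k → Option σ :=
    fun t => if (t : ℕ) = i then some c else if (t : ℕ) = j then some d else none with hgdef
  have hset : cylSet k g = {x | x i = c ∧ x j = d} := by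
    ext x
    constructor
    · intro h
      refine ⟨h i' c (by simp [hgdef, i']), h j' d ?_⟩
      simp [hgdef, j', hij.symm]
    · intro ⟨h1, h2⟩ t c' hc'
      simp only [hgdef] at hc'
      split_ifs at hc' with ht1 ht2
      · rw [ht1, ← Option.some_injective _ hc']; exact h1
      · rw [ht2, ← Option.some_injective _ hc']; exact h2
      all_goals exact Option.noConfusion hc'
  have hmeas := cylSet_measure μ r hμ _ k g rfl
  rw [hset] at hmeas
  rw [hmeas]
  have hsub : (Finset.univ : Finset (Fin k)) = {i', j'} ∪ (Finset.univ \ {i', j'}) := by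
    simp [Finset.union_sdiff_of_subset]
  have hone : ∀ t ∈ Finset.univ \ ({i', j'} : Finset (Fin k)), (g t).elim 1 ⇑r = 1 := by
    intro t ht
    simp only [Finset.mem_sdiff, Finset.mem_insert, Finset.mem_singleton] at ht
    have hti : (t : ℕ) ≠ i := fun h => ht.2 (Or.inl (Fin.ext h))
    have htj : (t : ℕ) ≠ j := fun h => ht.2 (Or.inr (Fin.ext h))
    simp [hgdef, hti, htj]
  have hii : i' ≠ j' := fun h => hij (by simpa [i', j'] using congrArg Fin.val h)
  calc ∏ t, (g t).elim 1 ⇑r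
      = ∏ t ∈ ({i', j'} : Finset (Fin k)), (g t).elim 1 ⇑r := by
        refine (Finset.prod_subset (Finset.subset_univ _) ?_).symm
        intro t _ ht
        exact hone t (by simp [ht])
    _ = (g i').elim 1 ⇑r * (g j').elim 1 ⇑r := Finset.prod_pair hii
    _ = r c * r d := by
        have h1 : g i' = some c := by simp [hgdef, i']
        have h2 : g j' = some d := by simp [hgdef, j', hij.symm]
        rw [h1, h2]; rfl

lemma measure_eval_preimage (μ : Measure (ℕ → σ)) (r : PMF σ)
    (hμ : ∀ (k : ℕ) (ξs : Fin k → σ),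
      μ {x | ∀ i : Fin k, x (i : ℕ) = ξs i} = ∏ i, r (ξs i))
    (i : ℕ) (S : Set σ) :
    μ ((fun x : ℕ → σ => x i) ⁻¹' S) = ∑' c : S, r c := by
  have hset : (fun x : ℕ → σ => x i) ⁻¹' S = ⋃ c : S, {x : ℕ → σ | x i = (c : σ)} := by
    ext x; simp [Set.mem_iUnion]
  rw [hset, measure_iUnion]
  · exact tsum_congr fun c => measure_single μ r hμ i c
  · intro c₁ c₂ hne
    rw [Function.onFun, Set.disjoint_left]
    intro x h1 h2
    exact hne (Subtype.ext ((h1 : x i = _) ▸ (h2 : x i = _) ▸ rfl))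
  · intro c
    exact measurable_pi_apply i (measurableSet_singleton _)

lemma indepFun_eval (μ : Measure (ℕ → σ)) (r : PMF σ)
    (hμ : ∀ (k : ℕ) (ξs : Fin k → σ),
      μ {x | ∀ i : Fin k, x (i : ℕ) = ξs i} = ∏ i, r (ξs i))
    {i j : ℕ} (hij : i ≠ j) :
    IndepFun (fun x : ℕ → σ => x i) (fun x : ℕ → σ => x j) μ := by
  rw [indepFun_iff_measure_inter_preimage_eq_mul]
  intro S T _ _
  have hset : (fun x : ℕ → σ => x i) ⁻¹' S ∩ (fun x : ℕ → σ => x j) ⁻¹' T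
      = ⋃ cd : S × T, {x : ℕ → σ | x i = (cd.1 : σ) ∧ x j = (cd.2 : σ)} := by
    ext x
    simp only [Set.mem_inter_iff, Set.mem_preimage, Set.mem_iUnion]
    constructor
    · intro ⟨h1, h2⟩; exact ⟨⟨⟨x i, h1⟩, ⟨x j, h2⟩⟩, rfl, rfl⟩
    · intro ⟨cd, h1, h2⟩; exact ⟨h1 ▸ cd.1.2, h2 ▸ cd.2.2⟩
  rw [hset, measure_iUnion, measure_eval_preimage μ r hμ, measure_eval_preimage μ r hμ]
  · calc ∑' cd : S × T, μ {x : ℕ → σ | x i = (cd.1 : σ) ∧ x j = (cd.2 : σ)}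
        = ∑' cd : S × T, r cd.1 * r cd.2 :=
          tsum_congr fun cd => measure_pair μ r hμ hij _ _
      _ = ∑' c : S, ∑' d : T, (r c : ℝ≥0∞) * r d :=
          ENNReal.tsum_prod' (f := fun cd : S × T => (r cd.1 : ℝ≥0∞) * r cd.2)
      _ = ∑' c : S, (r c : ℝ≥0∞) * ∑' d : T, r d := tsum_congr fun c => ENNReal.tsum_mul_left
      _ = (∑' c : S, r c) * ∑' d : T, r d := ENNReal.tsum_mul_right
  · intro cd₁ cd₂ hne
    rw [Function.onFun, Set.disjoint_left]
    intro x h1 h2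
    refine hne (Prod.ext (Subtype.ext ?_) (Subtype.ext ?_))
    · exact h1.1 ▸ h2.1 ▸ rfl
    · exact h1.2 ▸ h2.2 ▸ rfl
  · intro cd
    exact ((measurable_pi_apply i (measurableSet_singleton _)).inter
      (measurable_pi_apply j (measurableSet_singleton _)))

end ProdSingAux

namespace ProdSingAux

variable {σ : Type*} [Countable σ] [MeasurableSpace σ] [DiscreteMeasurableSpace σ]

lemma identDistrib_eval (μ : Measure (ℕ → σ)) (r : PMF σ)
    (hμ : ∀ (k : ℕ) (ξs : Fin k → σ),
      μ {x | ∀ i : Fin k, x (i : ℕ) = ξs i} = ∏ i, r (ξs i))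
    (i : ℕ) :
    IdentDistrib (fun x : ℕ → σ => x i) (fun x : ℕ → σ => x 0) μ μ := by
  refine ⟨(measurable_pi_apply i).aemeasurable, (measurable_pi_apply 0).aemeasurable, ?_⟩
  refine Measure.ext_of_singleton fun c => ?_
  rw [Measure.map_apply (measurable_pi_apply i) (measurableSet_singleton c),
    Measure.map_apply (measurable_pi_apply 0) (measurableSet_singleton c)]
  have h1 : (fun x : ℕ → σ => x i) ⁻¹' {c} = {x : ℕ → σ | x i = c} := rfl
  have h2 : (fun x : ℕ → σ => x 0) ⁻¹' {c} = {x : ℕ → σ | x 0 = c} := rfl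
  rw [h1, h2, measure_single μ r hμ i c, measure_single μ r hμ 0 c]

end ProdSingAux

theorem ProdSingAux.main {σ : Type*} [Countable σ]
    [MeasurableSpace σ] [DiscreteMeasurableSpace σ]
    (p q : PMF σ) (hpq : p ≠ q)
    (μp μq : Measure (ℕ → σ)) [IsProbabilityMeasure μp] [IsProbabilityMeasure μq]
    (hμp : ∀ (k : ℕ) (ξs : Fin k → σ),
      μp {x | ∀ i : Fin k, x (i : ℕ) = ξs i} = ∏ i, p (ξs i))
    (hμq : ∀ (k : ℕ) (ξs : Fin k → σ),
      μq {x | ∀ i : Fin k, x (i : ℕ) = ξs i} = ∏ i, q (ξs i)) :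
    μp ⟂ₘ μq := by
  classical
  obtain ⟨a, ha⟩ : ∃ a : σ, p a ≠ q a := by
    by_contra h
    push_neg at h
    exact hpq (PMF.ext h)
  set A : ℕ → Set (ℕ → σ) := fun i => {x | x i = a} with hA
  have hAmeas : ∀ i, MeasurableSet (A i) := by
    intro i
    have h : A i = (fun x : ℕ → σ => x i) ⁻¹' {a} := rfl
    rw [h]
    exact measurable_pi_apply i (measurableSet_singleton a)
  set Y : ℕ → (ℕ → σ) → ℝ := fun i => (A i).indicator fun _ => (1 : ℝ) with hY
  set f : σ → ℝ := fun c => if c = a then (1 : ℝ) else 0 with hf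
  have hfm : Measurable f := measurable_of_countable f
  have hYeq : ∀ i, Y i = f ∘ (fun x : ℕ → σ => x i) := by
    intro i
    funext x
    simp [hY, hf, Set.indicator_apply, hA, Function.comp]
  have key : ∀ (μ : Measure (ℕ → σ)) (r : PMF σ), IsProbabilityMeasure μ →
      (∀ (k : ℕ) (ξs : Fin k → σ),
        μ {x | ∀ i : Fin k, x (i : ℕ) = ξs i} = ∏ i, r (ξs i)) →
      ∀ᵐ x ∂μ, Filter.Tendsto (fun n : ℕ => (∑ i ∈ Finset.range n, Y i x) / (n : ℝ))
        Filter.atTop (nhds (r a).toReal) := by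
    intro μ r hprob hμ
    have hint : Integrable (Y 0) μ := by
      rw [hY]
      exact (integrable_indicator_iff (hAmeas 0)).2
        (integrableOn_const (measure_ne_top μ _))
    have hindep : Pairwise (Function.onFun (ProbabilityTheory.IndepFun · · μ) Y) := by
      intro i j hij
      have h := ProdSingAux.indepFun_eval μ r hμ hij
      rw [Function.onFun, hYeq i, hYeq j]
      exact h.comp hfm hfm
    have hident : ∀ i, ProbabilityTheory.IdentDistrib (Y i) (Y 0) μ μ := by
      intro i
      rw [hYeq i, hYeq 0]
      exact (ProdSingAux.identDistrib_eval μ r hμ i).comp hfm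
    have hexp : (∫ x, Y 0 x ∂μ) = (r a).toReal := by
      rw [hY]
      rw [integral_indicator_const (1 : ℝ) (hAmeas 0)]
      rw [Measure.real, ProdSingAux.measure_single μ r hμ 0 a]
      simp
    have hsl := ProbabilityTheory.strong_law_ae_real Y hint hindep hident
    rw [hexp] at hsl
    exact hsl
  have hp' := key μp p inferInstance hμp
  have hq' := key μq q inferInstance hμq
  have hne : (p a).toReal ≠ (q a).toReal := fun h =>
    ha ((ENNReal.toReal_eq_toReal_iff' (PMF.apply_ne_top p a) (PMF.apply_ne_top q a)).1 h)
  refine Measure.MutuallySingular.mk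
    (s := {x : ℕ → σ | ¬ Filter.Tendsto (fun n : ℕ => (∑ i ∈ Finset.range n, Y i x) / (n : ℝ))
      Filter.atTop (nhds (p a).toReal)})
    (t := {x : ℕ → σ | Filter.Tendsto (fun n : ℕ => (∑ i ∈ Finset.range n, Y i x) / (n : ℝ))
      Filter.atTop (nhds (p a).toReal)}) ?_ ?_ ?_
  · exact ae_iff.mp hp'
  · refine measure_mono_null ?_ (ae_iff.mp hq')
    intro x hx hx'
    exact hne (tendsto_nhds_unique hx hx')
  · intro x _
    by_cases h : Filter.Tendsto (fun n : ℕ => (∑ i ∈ Finset.range n, Y i x) / (n : ℝ))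
      Filter.atTop (nhds (p a).toReal)
    · exact Or.inr h
    · exact Or.inl h

end ProdSingAuxSection

open MeasureTheory
open scoped BigOperators

/-- If `p ≠ q` are probability mass functions on a countable set `σ`, then the
i.i.d. product measures `p^⊗ℕ` and `q^⊗ℕ` on `σ^ℕ` (characterized by their values on
cylinder sets) are mutually singular. -/
theorem product_measures_mutuallySingular {σ : Type*} [Countable σ]
    [MeasurableSpace σ] [DiscreteMeasurableSpace σ]
    (p q : PMF σ) (hpq : p ≠ q)
    (μp μq : Measure (ℕ → σ)) [IsProbabilityMeasure μp] [IsProbabilityMeasure μq]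
    (hμp : ∀ (k : ℕ) (ξs : Fin k → σ),
      μp {x | ∀ i : Fin k, x (i : ℕ) = ξs i} = ∏ i, p (ξs i))
    (hμq : ∀ (k : ℕ) (ξs : Fin k → σ),
      μq {x | ∀ i : Fin k, x (i : ℕ) = ξs i} = ∏ i, q (ξs i)) :
    μp ⟂ₘ μq := by
  exact ProdSingAux.main p q hpq μp μq hμp hμq
end

section
/- Let σ be a finite set, p a probability mass function on σ, μ = p^{⊗ℕ}, and let U ⊂ M(σ) be an open neighborhood of p in the simplex of probability vectors (with the ℓ¹ or euclidean metric). Then there exist constants C > 0 and a ∈ (0,1) such that for all n, μ({x : the empirical distribution f^{(n)}(x) ∉ U}) ≤ C·aⁿ. -/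
open MeasureTheory
open scoped BigOperators

/-- Empirical frequency of the outcome `ξ` among the first `n` entries of `x : ℕ → σ`. -/
noncomputable def empFreq {σ : Type*} [DecidableEq σ] (n : ℕ) (x : ℕ → σ) (ξ : σ) : ℝ :=
  ((Finset.range n).filter (fun j => x j = ξ)).card / n

section Helpers
open Finset in
/-- Combinatorial Chernoff bound for the count of letters in `S`. -/
lemma chernoff_count {σ : Type*} [Fintype σ] [DecidableEq σ]
    (p : σ → ℝ) (hp : ∀ ξ, 0 ≤ p ξ) (hp1 : ∑ ξ, p ξ = 1)
    (S : Finset σ) (ε : ℝ) (hε : 0 < ε) (hε1 : ε ≤ 1) (n : ℕ) :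
    ∑ w ∈ Finset.univ.filter (fun w : Fin n → σ =>
        (n : ℝ) * ((∑ ξ ∈ S, p ξ) + ε) ≤ ((Finset.univ.filter (fun i => w i ∈ S)).card : ℝ)),
      ∏ i, p (w i) ≤ Real.exp (-(n * ε ^ 2 / 8)) := by
  classical
  set q : ℝ := ∑ ξ ∈ S, p ξ with hq
  have hq0 : 0 ≤ q := Finset.sum_nonneg fun ξ _ => hp ξ
  have hq1 : q ≤ 1 := by
    rw [← hp1]
    exact Finset.sum_le_sum_of_subset_of_nonneg (Finset.subset_univ S) (fun ξ _ _ => hp ξ)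
  set t : ℝ := ε / 4 with htdef
  have ht : 0 < t := by positivity
  have ht1 : t ≤ 1 := by rw [htdef]; linarith
  set cnt : (Fin n → σ) → ℝ := fun w => ((Finset.univ.filter (fun i => w i ∈ S)).card : ℝ)
    with hcnt
  -- step 1 : bound each term by tilted term
  have step1 : ∑ w ∈ Finset.univ.filter (fun w : Fin n → σ => (n : ℝ) * (q + ε) ≤ cnt w),
      ∏ i, p (w i)
      ≤ ∑ w : Fin n → σ, (∏ i, p (w i)) * Real.exp (t * cnt w - t * (n * (q + ε))) := by
    refine le_trans (Finset.sum_le_sum (fun w hw => ?_)) (Finset.sum_le_sum_of_subset_of_nonneg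
      (Finset.subset_univ _) (fun w _ _ =>
        mul_nonneg (Finset.prod_nonneg fun i _ => hp (w i)) (Real.exp_pos _).le))
    have hw' : (n : ℝ) * (q + ε) ≤ cnt w := (Finset.mem_filter.mp hw).2
    have h1 : (1 : ℝ) ≤ Real.exp (t * cnt w - t * (n * (q + ε))) := by
      rw [← Real.exp_zero]
      apply Real.exp_le_exp.mpr
      nlinarith
    have hprod : 0 ≤ ∏ i, p (w i) := Finset.prod_nonneg fun i _ => hp (w i)
    nlinarith
  -- step 2 : compute the tilted sum
  have cnt_eq : ∀ w : Fin n → σ, cnt w = ∑ i, (if w i ∈ S then (1:ℝ) else 0) := by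
    intro w
    simp only [hcnt, Finset.card_filter, Nat.cast_sum, Nat.cast_ite, Nat.cast_one, Nat.cast_zero]
  have step2 : ∑ w : Fin n → σ, (∏ i, p (w i)) * Real.exp (t * cnt w - t * (n * (q + ε)))
      = Real.exp (- (t * (n * (q + ε)))) * (∑ ξ, p ξ * Real.exp (t * (if ξ ∈ S then 1 else 0))) ^ n := by
    have key : (∑ ξ, p ξ * Real.exp (t * (if ξ ∈ S then 1 else 0))) ^ n
        = ∑ w : Fin n → σ, ∏ i, (p (w i) * Real.exp (t * (if w i ∈ S then 1 else 0))) := by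
      rw [← Fintype.prod_sum (fun (_ : Fin n) (ξ : σ) => p ξ * Real.exp (t * (if ξ ∈ S then 1 else 0)))]
      simp [Finset.prod_const]
    rw [key, Finset.mul_sum]
    refine Finset.sum_congr rfl fun w _ => ?_
    rw [Finset.prod_mul_distrib, ← Real.exp_sum]
    have : ∑ i, t * (if w i ∈ S then (1:ℝ) else 0) = t * cnt w := by
      rw [cnt_eq, Finset.mul_sum]
    rw [this, Real.exp_sub, Real.exp_neg]
    ring
  -- step 3 : evaluate the one letter mgf
  have step3 : ∑ ξ, p ξ * Real.exp (t * (if ξ ∈ S then 1 else 0)) = 1 + q * (Real.exp t - 1) := by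
    rw [← Finset.sum_filter_add_sum_filter_not Finset.univ (· ∈ S)]
    have h1 : ∑ ξ ∈ Finset.univ.filter (· ∈ S), p ξ * Real.exp (t * (if ξ ∈ S then 1 else 0))
        = q * Real.exp t := by
      rw [hq, Finset.filter_mem_eq_inter, Finset.univ_inter, Finset.sum_mul]
      refine Finset.sum_congr rfl fun ξ hξ => by simp [hξ]
    have h2 : ∑ ξ ∈ Finset.univ.filter (¬ · ∈ S), p ξ * Real.exp (t * (if ξ ∈ S then 1 else 0))
        = 1 - q := by
      have : ∑ ξ ∈ Finset.univ.filter (¬ · ∈ S), p ξ * Real.exp (t * (if ξ ∈ S then 1 else 0))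
          = ∑ ξ ∈ Finset.univ.filter (¬ · ∈ S), p ξ := by
        refine Finset.sum_congr rfl fun ξ hξ => ?_
        have : ξ ∉ S := by simpa using (Finset.mem_filter.mp hξ).2
        simp [this]
      rw [this]
      have := Finset.sum_filter_add_sum_filter_not Finset.univ (· ∈ S) p
      rw [hp1] at this
      have hqq : ∑ ξ ∈ Finset.univ.filter (· ∈ S), p ξ = q := by
        rw [hq, Finset.filter_mem_eq_inter, Finset.univ_inter]
      linarith
    rw [h1, h2]; ring
  -- step 4 : final estimate
  have hmgf : 1 + q * (Real.exp t - 1) ≤ Real.exp (q * (Real.exp t - 1)) := by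
    have := Real.add_one_le_exp (q * (Real.exp t - 1))
    linarith
  have hmgf0 : 0 ≤ 1 + q * (Real.exp t - 1) := by
    have h := Real.exp_pos t
    have : 0 ≤ Real.exp t - 1 := by
      have := Real.add_one_le_exp t; linarith
    nlinarith
  have hexpb : Real.exp t - 1 ≤ t + t ^ 2 := by
    have h := Real.abs_exp_sub_one_sub_id_le (x := t) (by rw [abs_of_nonneg ht.le]; exact ht1)
    have := abs_le.mp h
    linarith [this.2]
  calc ∑ w ∈ Finset.univ.filter (fun w : Fin n → σ => (n : ℝ) * (q + ε) ≤ cnt w), ∏ i, p (w i)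
      ≤ Real.exp (- (t * (n * (q + ε)))) * (∑ ξ, p ξ * Real.exp (t * (if ξ ∈ S then 1 else 0))) ^ n := by
        rw [← step2]; exact step1
    _ ≤ Real.exp (- (t * (n * (q + ε)))) * Real.exp (q * (Real.exp t - 1)) ^ n := by
        apply mul_le_mul_of_nonneg_left _ (Real.exp_pos _).le
        rw [step3]
        exact pow_le_pow_left₀ hmgf0 hmgf n
    _ = Real.exp ((n : ℝ) * (q * (Real.exp t - 1) - t * (q + ε))) := by
        rw [← Real.exp_nat_mul, ← Real.exp_add]
        ring_nf
    _ ≤ Real.exp (-(n * ε ^ 2 / 8)) := by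
        apply Real.exp_le_exp.mpr
        have hkey : q * (Real.exp t - 1) - t * (q + ε) ≤ - (ε ^ 2 / 8) := by
          have h1 : q * (Real.exp t - 1) ≤ q * (t + t ^ 2) :=
            mul_le_mul_of_nonneg_left hexpb hq0
          have h2 : q * (t + t ^ 2) - t * (q + ε) = q * t ^ 2 - t * ε := by ring
          have h3 : q * t ^ 2 ≤ t ^ 2 := by nlinarith
          have h4 : t ^ 2 - t * ε = -(3 * ε ^ 2 / 16) := by rw [htdef]; ring
          nlinarith
        have hn : (0 : ℝ) ≤ n := Nat.cast_nonneg n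
        calc (n : ℝ) * (q * (Real.exp t - 1) - t * (q + ε))
            ≤ (n : ℝ) * (- (ε ^ 2 / 8)) := mul_le_mul_of_nonneg_left hkey hn
          _ = -(n * ε ^ 2 / 8) := by ring

lemma sum_union_le {α : Type*} [DecidableEq α] (f : α → ℝ) (hf : ∀ a, 0 ≤ f a)
    (A B : Finset α) : ∑ a ∈ A ∪ B, f a ≤ (∑ a ∈ A, f a) + ∑ a ∈ B, f a := by
  have h := Finset.sum_union_inter (s₁ := A) (s₂ := B) (f := f)
  have h2 : 0 ≤ ∑ a ∈ A ∩ B, f a := Finset.sum_nonneg fun a _ => hf a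
  linarith

lemma sum_biUnion_le_sum {ι α : Type*} [DecidableEq α] (f : α → ℝ) (hf : ∀ a, 0 ≤ f a)
    (s : Finset ι) (t : ι → Finset α) :
    ∑ a ∈ s.biUnion t, f a ≤ ∑ i ∈ s, ∑ a ∈ t i, f a := by
  classical
  induction s using Finset.induction_on with
  | empty => simp
  | insert i s hx ih =>
    rw [Finset.biUnion_insert, Finset.sum_insert hx]
    exact le_trans (sum_union_le f hf _ _) (by linarith)

end Helpers


set_option maxHeartbeats 1000000 in
/-- Let `σ` be finite, `p` a probability mass function on `σ`, `μ = p^⊗ℕ` the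
i.i.d. product measure on `σ^ℕ` (characterized by its cylinder probabilities), and `U` an
open neighborhood of `p` in the space of probability vectors `σ → ℝ`. Then there exist
`C > 0` and `a ∈ (0,1)` such that for every `n`,
`μ {x | empirical distribution f⁽ⁿ⁾(x) ∉ U} ≤ C·aⁿ`. -/
theorem sanov_type_bound {σ : Type*} [Fintype σ] [DecidableEq σ]
    [MeasurableSpace σ] [DiscreteMeasurableSpace σ]
    (p : σ → ℝ) (hp : ∀ ξ, 0 ≤ p ξ) (hp1 : ∑ ξ, p ξ = 1)
    (μ : Measure (ℕ → σ)) [IsProbabilityMeasure μ]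
    (hμ : ∀ (k : ℕ) (ξs : Fin k → σ),
      μ {x | ∀ i : Fin k, x (i : ℕ) = ξs i} = ∏ i, ENNReal.ofReal (p (ξs i)))
    (U : Set (σ → ℝ)) (hU : IsOpen U) (hpU : p ∈ U) :
    ∃ C > 0, ∃ a ∈ Set.Ioo (0 : ℝ) 1, ∀ n : ℕ,
      μ {x | (fun ξ => empFreq n x ξ) ∉ U} ≤ ENNReal.ofReal (C * a ^ n) := by
  classical
  obtain ⟨ε₀, hε₀, hball⟩ := Metric.isOpen_iff.mp hU p hpU
  set ε : ℝ := min ε₀ 1 with hεdef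
  have hε : 0 < ε := lt_min hε₀ one_pos
  have hε1 : ε ≤ 1 := min_le_right _ _
  have hballU : Metric.ball p ε ⊆ U := (Metric.ball_subset_ball (min_le_left _ _)).trans hball
  set a : ℝ := Real.exp (-(ε ^ 2 / 8)) with hadef
  set C : ℝ := 2 * Fintype.card σ + 1 with hCdef
  have hC : 0 < C := by positivity
  have ha0 : 0 < a := Real.exp_pos _
  have ha1 : a < 1 := by
    rw [hadef, Real.exp_lt_one_iff]; nlinarith
  refine ⟨C, hC, a, ⟨ha0, ha1⟩, fun n => ?_⟩
  -- the bad set of words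
  set B : Finset (Fin n → σ) := Finset.univ.filter
    (fun w : Fin n → σ =>
      (fun ξ => ((Finset.univ.filter (fun i => w i = ξ)).card : ℝ) / n) ∉ U) with hBdef
  -- empirical frequency only depends on the first n letters
  have freq_eq : ∀ (x : ℕ → σ) (ξ : σ),
      empFreq n x ξ = ((Finset.univ.filter (fun i : Fin n => x (i : ℕ) = ξ)).card : ℝ) / n := by
    intro x ξ
    unfold empFreq
    congr 1
    norm_cast
    rw [Finset.card_filter, Finset.card_filter,
      ← Fin.sum_univ_eq_sum_range (fun j => if x j = ξ then 1 else 0) n]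
  -- the bad event is the union of bad cylinders
  have hset : {x : ℕ → σ | (fun ξ => empFreq n x ξ) ∉ U}
      = ⋃ w ∈ B, {x : ℕ → σ | ∀ i : Fin n, x (i : ℕ) = w i} := by
    ext x
    simp only [Set.mem_setOf_eq, Set.mem_iUnion, exists_prop]
    have hfeq : ∀ w : Fin n → σ, (∀ i : Fin n, x (i : ℕ) = w i) →
        (fun ξ => empFreq n x ξ)
          = (fun ξ => ((Finset.univ.filter (fun i : Fin n => w i = ξ)).card : ℝ) / n) := by
      intro w hxw
      funext ξ
      rw [freq_eq]
      have hfil : Finset.univ.filter (fun i : Fin n => x (i : ℕ) = ξ)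
          = Finset.univ.filter (fun i : Fin n => w i = ξ) :=
        Finset.filter_congr fun i _ => by rw [hxw i]
      rw [hfil]
    constructor
    · intro hx
      refine ⟨fun i => x (i : ℕ), ?_, fun i => rfl⟩
      rw [hBdef, Finset.mem_filter]
      refine ⟨Finset.mem_univ _, fun hmem => hx ?_⟩
      rw [hfeq (fun i => x (i : ℕ)) (fun i => rfl)]
      exact hmem
    · rintro ⟨w, hwB, hxw⟩
      rw [hBdef, Finset.mem_filter] at hwB
      rw [hfeq w hxw]
      exact hwB.2
  -- measurability and disjointness of the cylinders
  have hmeas : ∀ w : Fin n → σ,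
      MeasurableSet {x : ℕ → σ | ∀ i : Fin n, x (i : ℕ) = w i} := by
    intro w
    have : {x : ℕ → σ | ∀ i : Fin n, x (i : ℕ) = w i}
        = ⋂ i : Fin n, (fun x : ℕ → σ => x (i : ℕ)) ⁻¹' {w i} := by
      ext x; simp [Set.mem_iInter]
    rw [this]
    exact MeasurableSet.iInter fun i =>
      (measurable_pi_apply (i : ℕ)) (MeasurableSet.singleton (w i))
  have hdisj : (B : Set (Fin n → σ)).PairwiseDisjoint
      (fun w => {x : ℕ → σ | ∀ i : Fin n, x (i : ℕ) = w i}) := by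
    intro w _ w' _ hww'
    obtain ⟨i, hi⟩ := Function.ne_iff.mp hww'
    refine Set.disjoint_left.mpr fun x hx hx' => hi ?_
    rw [← hx i, ← hx' i]
  -- compute the measure
  have hmeasure : μ {x : ℕ → σ | (fun ξ => empFreq n x ξ) ∉ U}
      = ENNReal.ofReal (∑ w ∈ B, ∏ i, p (w i)) := by
    rw [hset, measure_biUnion_finset hdisj (fun w _ => hmeas w)]
    rw [ENNReal.ofReal_sum_of_nonneg (fun w _ => Finset.prod_nonneg fun i _ => hp (w i))]
    refine Finset.sum_congr rfl fun w _ => ?_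
    rw [hμ n w, ENNReal.ofReal_prod_of_nonneg (fun i _ => hp (w i))]
  rw [hmeasure]
  apply ENNReal.ofReal_le_ofReal
  -- now a purely real inequality
  -- deviation sets
  set Bp : σ → Finset (Fin n → σ) := fun ξ => Finset.univ.filter
    (fun w : Fin n → σ => (n : ℝ) * ((∑ ζ ∈ {ξ}, p ζ) + ε)
      ≤ ((Finset.univ.filter (fun i => w i ∈ ({ξ} : Finset σ))).card : ℝ)) with hBp
  set Bm : σ → Finset (Fin n → σ) := fun ξ => Finset.univ.filter
    (fun w : Fin n → σ => (n : ℝ) * ((∑ ζ ∈ ({ξ}ᶜ : Finset σ), p ζ) + ε)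
      ≤ ((Finset.univ.filter (fun i => w i ∈ ({ξ}ᶜ : Finset σ))).card : ℝ)) with hBm
  have hkey : ∀ w ∈ B, ∃ ξ : σ, w ∈ Bp ξ ∪ Bm ξ := by
    intro w hw
    rw [hBdef, Finset.mem_filter] at hw
    have hnotball : (fun ξ => ((Finset.univ.filter (fun i => w i = ξ)).card : ℝ) / n)
        ∉ Metric.ball p ε := fun h => hw.2 (hballU h)
    rw [Metric.mem_ball, dist_pi_lt_iff hε, not_forall] at hnotball
    obtain ⟨ξ, hξ⟩ := hnotball
    push_neg at hξ
    rw [Real.dist_eq, le_abs] at hξ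
    refine ⟨ξ, ?_⟩
    set c : ℝ := ((Finset.univ.filter (fun i : Fin n => w i = ξ)).card : ℝ) with hc
    have hc0 : 0 ≤ c := Nat.cast_nonneg _
    have hcn : c ≤ n := by
      rw [hc]
      have := Finset.card_filter_le (Finset.univ : Finset (Fin n)) (fun i => w i = ξ)
      rw [Finset.card_univ, Fintype.card_fin] at this
      exact_mod_cast this
    have hcompl : ((Finset.univ.filter (fun i : Fin n => w i ∈ ({ξ}ᶜ : Finset σ))).card : ℝ)
        = n - c := by
      have := Finset.card_filter_add_card_filter_not
        (s := (Finset.univ : Finset (Fin n))) (p := fun i => w i = ξ)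
      have h2 : Finset.univ.filter (fun i : Fin n => w i ∈ ({ξ}ᶜ : Finset σ))
          = Finset.univ.filter (fun i : Fin n => ¬ w i = ξ) := by
        apply Finset.filter_congr; intro i _; simp
      rw [Finset.card_univ, Fintype.card_fin] at this
      have hAB : ((Finset.univ.filter (fun i : Fin n => ¬ w i = ξ)).card : ℝ) + c = n := by
        rw [hc, add_comm]
        exact_mod_cast congrArg (Nat.cast : ℕ → ℝ) this
      rw [h2]
      linarith
    rcases hξ with h1 | h1
    · -- c/n - p ξ ≥ ε : upper deviation
      refine Finset.mem_union_left _ ?_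
      rw [hBp, Finset.mem_filter]
      refine ⟨Finset.mem_univ _, ?_⟩
      simp only [Finset.sum_singleton, Finset.mem_singleton]
      rcases Nat.eq_zero_or_pos n with hn0 | hn
      · have h0 : (n : ℝ) = 0 := by rw [hn0]; norm_num
        rw [h0, zero_mul]
        exact Nat.cast_nonneg _
      · have hn' : (0:ℝ) < n := by exact_mod_cast hn
        have hfr : p ξ + ε ≤ c / n := by linarith
        calc (n:ℝ) * (p ξ + ε) ≤ (n:ℝ) * (c / n) :=
              mul_le_mul_of_nonneg_left hfr hn'.le
          _ = c := by field_simp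
          _ = _ := by rw [hc]
    · -- p ξ - c/n ≥ ε : lower deviation
      refine Finset.mem_union_right _ ?_
      rw [hBm, Finset.mem_filter]
      refine ⟨Finset.mem_univ _, ?_⟩
      have hsum : ∑ ζ ∈ ({ξ}ᶜ : Finset σ), p ζ = 1 - p ξ := by
        have := Finset.sum_compl_add_sum ({ξ} : Finset σ) p
        rw [hp1] at this
        simp only [Finset.sum_singleton] at this
        linarith
      rw [hsum, hcompl]
      rcases Nat.eq_zero_or_pos n with hn0 | hn
      · have h0 : (n : ℝ) = 0 := by rw [hn0]; norm_num
        rw [h0] at hcn ⊢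
        have hc00 : c = 0 := le_antisymm hcn hc0
        rw [hc00, zero_mul, sub_zero]
      · have hn' : (0:ℝ) < n := by exact_mod_cast hn
        have hfr : c / n ≤ p ξ - ε := by linarith
        have hcle : c ≤ n * (p ξ - ε) := by
          rw [div_le_iff₀ hn'] at hfr; linarith
        nlinarith
  -- sum over the bad set is bounded by sum over deviation sets
  have hf0 : ∀ w : Fin n → σ, 0 ≤ ∏ i, p (w i) :=
    fun w => Finset.prod_nonneg fun i _ => hp (w i)
  have hsplit : ∑ w ∈ B, ∏ i, p (w i)
      ≤ ∑ ξ : σ, ((∑ w ∈ Bp ξ, ∏ i, p (w i)) + (∑ w ∈ Bm ξ, ∏ i, p (w i))) := by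
    have hsub : B ⊆ Finset.univ.biUnion (fun ξ : σ => Bp ξ ∪ Bm ξ) := by
      intro w hw
      obtain ⟨ξ, hξ⟩ := hkey w hw
      exact Finset.mem_biUnion.mpr ⟨ξ, Finset.mem_univ _, hξ⟩
    calc ∑ w ∈ B, ∏ i, p (w i)
        ≤ ∑ w ∈ Finset.univ.biUnion (fun ξ : σ => Bp ξ ∪ Bm ξ), ∏ i, p (w i) :=
          Finset.sum_le_sum_of_subset_of_nonneg hsub (fun w _ _ => hf0 w)
      _ ≤ ∑ ξ : σ, ∑ w ∈ Bp ξ ∪ Bm ξ, ∏ i, p (w i) :=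
          sum_biUnion_le_sum (fun w : Fin n → σ => ∏ i, p (w i)) hf0 _ _
      _ ≤ ∑ ξ : σ, ((∑ w ∈ Bp ξ, ∏ i, p (w i)) + (∑ w ∈ Bm ξ, ∏ i, p (w i))) := by
          refine Finset.sum_le_sum fun ξ _ => ?_
          exact sum_union_le (fun w : Fin n → σ => ∏ i, p (w i)) hf0 _ _
  -- Chernoff bound on each deviation set
  have hchern : ∀ ξ : σ,
      (∑ w ∈ Bp ξ, ∏ i, p (w i)) ≤ Real.exp (-(n * ε ^ 2 / 8))
      ∧ (∑ w ∈ Bm ξ, ∏ i, p (w i)) ≤ Real.exp (-(n * ε ^ 2 / 8)) := by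
    intro ξ
    exact ⟨chernoff_count p hp hp1 {ξ} ε hε hε1 n,
      chernoff_count p hp hp1 ({ξ}ᶜ) ε hε hε1 n⟩
  have hexp_pow : Real.exp (-(n * ε ^ 2 / 8)) = a ^ n := by
    rw [hadef, ← Real.exp_nat_mul]
    congr 1; ring
  calc ∑ w ∈ B, ∏ i, p (w i)
      ≤ ∑ ξ : σ, ((∑ w ∈ Bp ξ, ∏ i, p (w i)) + (∑ w ∈ Bm ξ, ∏ i, p (w i))) := hsplit
    _ ≤ ∑ _ξ : σ, (2 * Real.exp (-(n * ε ^ 2 / 8))) := by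
        refine Finset.sum_le_sum fun ξ _ => ?_
        have h := hchern ξ
        linarith [h.1, h.2]
    _ = (Fintype.card σ : ℝ) * (2 * Real.exp (-(n * ε ^ 2 / 8))) := by
        rw [Finset.sum_const, Finset.card_univ, nsmul_eq_mul]
    _ ≤ C * a ^ n := by
        rw [hexp_pow, hCdef]
        have := Real.exp_pos (-(n * ε ^ 2 / 8))
        have han : 0 ≤ a ^ n := pow_nonneg ha0.le n
        nlinarith [han]
end

section
/- Let σ, N be finite sets and for each ν∈N let p_ν be a probability mass function on σ, with p_ν ≠ p_{ν'} whenever ν ≠ ν'. Let w : N → [0,1] with Σ_ν w(ν)=1 and let μ = Σ_ν w(ν)·p_ν^{⊗ℕ} be the mixture of product measures on σ^ℕ. Then there exist pairwise disjoint measurable sets (Ξ_ν)_{ν∈N} in σ^ℕ such that p_ν^{⊗ℕ}(Ξ_{ν'}) = δ_{ν,ν'}, and consequently μ(Ξ_ν) = w(ν) for all ν. -/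
open MeasureTheory
open scoped BigOperators

section Aux

variable {σ : Type*} [Fintype σ] [DecidableEq σ]
    [MeasurableSpace σ] [DiscreteMeasurableSpace σ]

lemma aux_cyl_measurable (k : ℕ) (ξs : Fin k → σ) :
    MeasurableSet {x : ℕ → σ | ∀ i : Fin k, x (i : ℕ) = ξs i} := by
  have : {x : ℕ → σ | ∀ i : Fin k, x (i : ℕ) = ξs i}
      = ⋂ i : Fin k, (fun x : ℕ → σ => x (i : ℕ)) ⁻¹' {ξs i} := by
    ext x; simp [Set.mem_iInter]
  rw [this]
  exact MeasurableSet.iInter fun i =>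
    MeasurableSet.preimage (MeasurableSet.singleton (ξs i)) (measurable_pi_apply (i : ℕ))

lemma aux_cyl_box (p : σ → ℝ) (P : Measure (ℕ → σ))
    (hP : ∀ (k : ℕ) (ξs : Fin k → σ),
      P {x | ∀ i : Fin k, x (i : ℕ) = ξs i} = ∏ i, ENNReal.ofReal (p (ξs i)))
    (k : ℕ) (g : Fin k → Finset σ) :
    P {x | ∀ i : Fin k, x (i : ℕ) ∈ g i} = ∏ i, ∑ ξ ∈ g i, ENNReal.ofReal (p ξ) := by
  have hset : {x : ℕ → σ | ∀ i : Fin k, x (i : ℕ) ∈ g i}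
      = ⋃ ξs ∈ Fintype.piFinset g, {x : ℕ → σ | ∀ i : Fin k, x (i : ℕ) = ξs i} := by
    ext x
    simp only [Set.mem_setOf_eq, Set.mem_iUnion, Fintype.mem_piFinset]
    constructor
    · intro h
      exact ⟨fun i => x (i : ℕ), h, fun i => rfl⟩
    · rintro ⟨ξs, hξs, hx⟩ i
      rw [hx i]; exact hξs i
  rw [hset, measure_biUnion_finset ?_ (fun ξs _ => aux_cyl_measurable k ξs)]
  · rw [Finset.prod_univ_sum]
    exact Finset.sum_congr rfl fun ξs _ => hP k ξs
  · intro ξs hξs ξs' hξs' hne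
    rw [Function.onFun, Set.disjoint_left]
    intro x hx hx'
    exact hne (funext fun i => (hx i).symm.trans (hx' i))

lemma aux_hsum_one (p : σ → ℝ) (hp : ∀ ξ, 0 ≤ p ξ) (hp1 : ∑ ξ, p ξ = 1) :
    ∑ ξ : σ, ENNReal.ofReal (p ξ) = 1 := by
  rw [← ENNReal.ofReal_sum_of_nonneg (fun ξ _ => hp ξ), hp1, ENNReal.ofReal_one]

lemma aux_cyl_single (p : σ → ℝ) (hp : ∀ ξ, 0 ≤ p ξ) (hp1 : ∑ ξ, p ξ = 1)
    (P : Measure (ℕ → σ))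
    (hP : ∀ (k : ℕ) (ξs : Fin k → σ),
      P {x | ∀ i : Fin k, x (i : ℕ) = ξs i} = ∏ i, ENNReal.ofReal (p (ξs i)))
    (n : ℕ) (a : σ) : P {x | x n = a} = ENNReal.ofReal (p a) := by
  classical
  set g : Fin (n+1) → Finset σ := fun i => if (i : ℕ) = n then {a} else Finset.univ with hg
  have hset : {x : ℕ → σ | ∀ i : Fin (n+1), x (i : ℕ) ∈ g i} = {x | x n = a} := by
    ext x
    simp only [Set.mem_setOf_eq, hg]
    constructor
    · intro h
      have := h ⟨n, Nat.lt_succ_self n⟩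
      simpa using this
    · intro h i
      by_cases hi : (i : ℕ) = n
      · simp [hi, h]
      · simp [hi]
  rw [← hset, aux_cyl_box p P hP]
  rw [Finset.prod_eq_single (⟨n, Nat.lt_succ_self n⟩ : Fin (n+1))]
  · simp [hg]
  · intro i _ hi
    have hne : (i : ℕ) ≠ n := fun h => hi (Fin.ext h)
    simp [hg, hne, aux_hsum_one p hp hp1]
  · simp

lemma aux_cyl_pair (p : σ → ℝ) (hp : ∀ ξ, 0 ≤ p ξ) (hp1 : ∑ ξ, p ξ = 1)
    (P : Measure (ℕ → σ))
    (hP : ∀ (k : ℕ) (ξs : Fin k → σ),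
      P {x | ∀ i : Fin k, x (i : ℕ) = ξs i} = ∏ i, ENNReal.ofReal (p (ξs i)))
    {m n : ℕ} (hmn : m ≠ n) (a b : σ) :
    P {x | x m = a ∧ x n = b} = ENNReal.ofReal (p a) * ENNReal.ofReal (p b) := by
  classical
  set k := max m n + 1 with hk
  have hm : m < k := Nat.lt_succ_of_le (le_max_left m n)
  have hn : n < k := Nat.lt_succ_of_le (le_max_right m n)
  set g : Fin k → Finset σ := fun i =>
    if (i : ℕ) = m then {a} else if (i : ℕ) = n then {b} else Finset.univ with hg
  have hset : {x : ℕ → σ | ∀ i : Fin k, x (i : ℕ) ∈ g i} = {x | x m = a ∧ x n = b} := by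
    ext x
    simp only [Set.mem_setOf_eq, hg]
    constructor
    · intro h
      refine ⟨?_, ?_⟩
      · have := h ⟨m, hm⟩; simpa using this
      · have := h ⟨n, hn⟩; simpa [hmn.symm] using this
    · rintro ⟨h1, h2⟩ i
      by_cases him : (i : ℕ) = m
      · simp [him, h1]
      · by_cases hin : (i : ℕ) = n
        · simp [him, hin, h2, Ne.symm hmn]
        · simp [him, hin]
  rw [← hset, aux_cyl_box p P hP]
  have key : ∀ i : Fin k, (∑ ξ ∈ g i, ENNReal.ofReal (p ξ)) =
      (fun j : ℕ => if j = m then ENNReal.ofReal (p a)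
        else if j = n then ENNReal.ofReal (p b) else 1) (i : ℕ) := by
    intro i
    by_cases him : (i : ℕ) = m
    · simp [hg, him]
    · by_cases hin : (i : ℕ) = n
      · simp [hg, him, hin, Ne.symm hmn]
      · simp [hg, him, hin, aux_hsum_one p hp hp1]
  set h : ℕ → ENNReal := fun j => if j = m then ENNReal.ofReal (p a)
    else if j = n then ENNReal.ofReal (p b) else 1 with hh
  rw [Finset.prod_congr rfl (fun i _ => key i), Fin.prod_univ_eq_prod_range h k]
  rw [← Finset.prod_subset (s₁ := ({m, n} : Finset ℕ)) (s₂ := Finset.range k)]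
  · rw [Finset.prod_pair hmn]
    simp [hh, hmn.symm, Ne.symm hmn]
  · intro j hj
    simp only [Finset.mem_insert, Finset.mem_singleton] at hj
    rcases hj with h | h <;> simp [h, Finset.mem_range, hm, hn]
  · intro j _ hj
    simp only [Finset.mem_insert, Finset.mem_singleton, not_or] at hj
    simp [hh, hj.1, hj.2]

lemma aux_coord_preimage (p : σ → ℝ) (P : Measure (ℕ → σ))
    (hsingle : ∀ (n : ℕ) (a : σ), P {x | x n = a} = ENNReal.ofReal (p a))
    (n : ℕ) (s : Set σ) :
    P ((fun x : ℕ → σ => x n) ⁻¹' s) = ∑ a ∈ (Set.toFinite s).toFinset, ENNReal.ofReal (p a) := by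
  classical
  have hset : (fun x : ℕ → σ => x n) ⁻¹' s
      = ⋃ a ∈ (Set.toFinite s).toFinset, {x : ℕ → σ | x n = a} := by
    ext x
    simp only [Set.mem_preimage, Set.mem_iUnion, Set.Finite.mem_toFinset, Set.mem_setOf_eq]
    constructor
    · intro h; exact ⟨x n, h, rfl⟩
    · rintro ⟨a, ha, h⟩; rw [h]; exact ha
  rw [hset, measure_biUnion_finset]
  · exact Finset.sum_congr rfl fun a _ => hsingle n a
  · intro a _ b _ hab
    rw [Function.onFun, Set.disjoint_left]
    intro x hx hx'
    exact hab (hx.symm.trans hx')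
  · intro a _
    exact MeasurableSet.preimage (MeasurableSet.singleton a) (measurable_pi_apply n)

lemma aux_coord_indep (p : σ → ℝ) (P : Measure (ℕ → σ))
    (hsingle : ∀ (n : ℕ) (a : σ), P {x | x n = a} = ENNReal.ofReal (p a))
    (hpair : ∀ {m n : ℕ}, m ≠ n → ∀ (a b : σ),
      P {x | x m = a ∧ x n = b} = ENNReal.ofReal (p a) * ENNReal.ofReal (p b))
    {m n : ℕ} (hmn : m ≠ n) :
    ProbabilityTheory.IndepFun (fun x : ℕ → σ => x m) (fun x : ℕ → σ => x n) P := by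
  classical
  rw [ProbabilityTheory.indepFun_iff_measure_inter_preimage_eq_mul]
  intro s t _ _
  have hset : (fun x : ℕ → σ => x m) ⁻¹' s ∩ (fun x : ℕ → σ => x n) ⁻¹' t
      = ⋃ q ∈ (Set.toFinite s).toFinset ×ˢ (Set.toFinite t).toFinset,
        {x : ℕ → σ | x m = q.1 ∧ x n = q.2} := by
    ext x
    simp only [Set.mem_inter_iff, Set.mem_preimage, Set.mem_iUnion, Finset.mem_product,
      Set.Finite.mem_toFinset, Set.mem_setOf_eq]
    constructor
    · rintro ⟨h1, h2⟩; exact ⟨(x m, x n), ⟨h1, h2⟩, rfl, rfl⟩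
    · rintro ⟨⟨a, b⟩, ⟨ha, hb⟩, h1, h2⟩
      rw [h1, h2]; exact ⟨ha, hb⟩
  rw [hset, measure_biUnion_finset, aux_coord_preimage p P hsingle,
    aux_coord_preimage p P hsingle]
  · rw [Finset.sum_product]
    have : ∀ a ∈ (Set.toFinite s).toFinset, ∀ b ∈ (Set.toFinite t).toFinset,
        P {x : ℕ → σ | x m = a ∧ x n = b} = ENNReal.ofReal (p a) * ENNReal.ofReal (p b) :=
      fun a _ b _ => hpair hmn a b
    rw [Finset.sum_congr rfl fun a ha => Finset.sum_congr rfl fun b hb => this a ha b hb,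
      ← Finset.sum_mul_sum]
  · rintro ⟨a, b⟩ _ ⟨a', b'⟩ _ hne
    rw [Function.onFun, Set.disjoint_left]
    rintro x ⟨h1, h2⟩ ⟨h1', h2'⟩
    exact hne (Prod.ext (h1.symm.trans h1') (h2.symm.trans h2'))
  · rintro ⟨a, b⟩ _
    exact (MeasurableSet.preimage (MeasurableSet.singleton a) (measurable_pi_apply m)).inter
      (MeasurableSet.preimage (MeasurableSet.singleton b) (measurable_pi_apply n))

lemma aux_coord_ident (p : σ → ℝ) (P : Measure (ℕ → σ))
    (hsingle : ∀ (n : ℕ) (a : σ), P {x | x n = a} = ENNReal.ofReal (p a)) (n : ℕ) :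
    ProbabilityTheory.IdentDistrib (fun x : ℕ → σ => x n) (fun x : ℕ → σ => x 0) P P := by
  refine ⟨(measurable_pi_apply n).aemeasurable, (measurable_pi_apply 0).aemeasurable, ?_⟩
  refine Measure.ext fun s hs => ?_
  rw [Measure.map_apply (measurable_pi_apply n) hs, Measure.map_apply (measurable_pi_apply 0) hs,
    aux_coord_preimage p P hsingle, aux_coord_preimage p P hsingle]

/-- Strong law applied to the indicator of coordinate `= ξ`. -/
lemma aux_slln (p : σ → ℝ) (hp : ∀ ξ, 0 ≤ p ξ) (hp1 : ∑ ξ, p ξ = 1)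
    (P : Measure (ℕ → σ)) (hprob : IsProbabilityMeasure P)
    (hP : ∀ (k : ℕ) (ξs : Fin k → σ),
      P {x | ∀ i : Fin k, x (i : ℕ) = ξs i} = ∏ i, ENNReal.ofReal (p (ξs i)))
    (ξ : σ) :
    ∀ᵐ x ∂P, Filter.Tendsto
      (fun n : ℕ => (∑ i ∈ Finset.range n, (if x i = ξ then (1:ℝ) else 0)) / n)
      Filter.atTop (nhds (p ξ)) := by
  classical
  have hsingle := aux_cyl_single p hp hp1 P hP
  have hpair : ∀ {m n : ℕ}, m ≠ n → ∀ (a b : σ),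
      P {x | x m = a ∧ x n = b} = ENNReal.ofReal (p a) * ENNReal.ofReal (p b) :=
    fun hmn a b => aux_cyl_pair p hp hp1 P hP hmn a b
  set φ : σ → ℝ := fun c => if c = ξ then 1 else 0 with hφ
  have hφm : Measurable φ := measurable_of_countable φ
  set X : ℕ → (ℕ → σ) → ℝ := fun i x => φ (x i) with hX
  have hXind : X 0 = Set.indicator {x : ℕ → σ | x 0 = ξ} (fun _ => (1:ℝ)) := by
    ext x
    by_cases h : x 0 = ξ <;> simp [hX, hφ, h, Set.indicator_apply]
  have hmeas0 : MeasurableSet {x : ℕ → σ | x 0 = ξ} :=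
    MeasurableSet.preimage (MeasurableSet.singleton ξ) (measurable_pi_apply 0)
  have hint : Integrable (X 0) P := by
    rw [hXind]
    exact (integrable_const (1:ℝ)).indicator hmeas0
  have hindep : Pairwise (Function.onFun (ProbabilityTheory.IndepFun · · P) X) := by
    intro i j hij
    exact ProbabilityTheory.IndepFun.comp
      (aux_coord_indep p P hsingle hpair hij) hφm hφm
  have hident : ∀ i, ProbabilityTheory.IdentDistrib (X i) (X 0) P P := by
    intro i
    exact ProbabilityTheory.IdentDistrib.comp (aux_coord_ident p P hsingle i) hφm
  have hmean : (∫ x, X 0 x ∂P) = p ξ := by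
    rw [hXind, integral_indicator_const (1:ℝ) hmeas0, measureReal_def, hsingle 0 ξ,
      ENNReal.toReal_ofReal (hp ξ)]
    simp
  have := ProbabilityTheory.strong_law_ae_real X hint hindep hident
  rw [hmean] at this
  filter_upwards [this] with x hx
  exact hx

end Aux

/-- Let `σ, N` be finite sets, `(p ν)_{ν∈N}` pairwise distinct probability mass
functions on `σ`, `w : N → [0,1]` weights summing to `1`, `P ν = (p ν)^⊗ℕ` the i.i.d. product
measures on `σ^ℕ` (characterized by their cylinder probabilities), and
`μ = ∑ ν, w ν • P ν` the mixture. Then there are pairwise disjoint measurable sets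
`(Ξ ν)_{ν∈N}` with `P ν (Ξ ν') = δ_{ν,ν'}`, and consequently `μ (Ξ ν) = w ν` for all `ν`. -/
theorem mixture_decomposition {σ N : Type*} [Fintype σ] [DecidableEq σ] [Fintype N] [DecidableEq N]
    [MeasurableSpace σ] [DiscreteMeasurableSpace σ]
    (p : N → σ → ℝ) (hp : ∀ ν ξ, 0 ≤ p ν ξ) (hp1 : ∀ ν, ∑ ξ, p ν ξ = 1)
    (hdist : ∀ ν ν', ν ≠ ν' → p ν ≠ p ν')
    (w : N → ℝ) (hw0 : ∀ ν, 0 ≤ w ν) (hw1' : ∀ ν, w ν ≤ 1) (hw1 : ∑ ν, w ν = 1)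
    (P : N → Measure (ℕ → σ)) (hprob : ∀ ν, IsProbabilityMeasure (P ν))
    (hP : ∀ (ν : N) (k : ℕ) (ξs : Fin k → σ),
      P ν {x | ∀ i : Fin k, x (i : ℕ) = ξs i} = ∏ i, ENNReal.ofReal (p ν (ξs i))) :
    ∃ Ξ : N → Set (ℕ → σ),
      (∀ ν, MeasurableSet (Ξ ν)) ∧
      (Pairwise (Function.onFun Disjoint Ξ)) ∧
      (∀ ν ν', P ν (Ξ ν') = if ν = ν' then 1 else 0) ∧
      (∀ ν, (∑ ν', (ENNReal.ofReal (w ν')) • P ν') (Ξ ν) = ENNReal.ofReal (w ν)) := by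
  classical
  set Ξ : N → Set (ℕ → σ) := fun ν =>
    ⋂ ξ : σ, {x : ℕ → σ | Filter.Tendsto
      (fun n : ℕ => (∑ i ∈ Finset.range n, (if x i = ξ then (1:ℝ) else 0)) / n)
      Filter.atTop (nhds (p ν ξ))} with hΞ
  have hmeas : ∀ ν, MeasurableSet (Ξ ν) := by
    intro ν
    refine MeasurableSet.iInter fun ξ => ?_
    apply measurableSet_tendsto
    intro n
    apply Measurable.div_const
    apply Finset.measurable_sum
    intro i _
    exact Measurable.ite
      (MeasurableSet.preimage (MeasurableSet.singleton ξ) (measurable_pi_apply i))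
      measurable_const measurable_const
  have hdisj : Pairwise (Function.onFun Disjoint Ξ) := by
    intro ν ν' hνν'
    rw [Function.onFun, Set.disjoint_left]
    intro x hx hx'
    simp only [hΞ, Set.mem_iInter, Set.mem_setOf_eq] at hx hx'
    exact hdist ν ν' hνν' (funext fun ξ => tendsto_nhds_unique (hx ξ) (hx' ξ))
  have hone : ∀ ν, P ν (Ξ ν) = 1 := by
    intro ν
    have hae : ∀ᵐ x ∂(P ν), x ∈ Ξ ν := by
      have h2 : ∀ᵐ x ∂(P ν), ∀ ξ : σ, Filter.Tendsto
          (fun n : ℕ => (∑ i ∈ Finset.range n, (if x i = ξ then (1:ℝ) else 0)) / n)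
          Filter.atTop (nhds (p ν ξ)) :=
        MeasureTheory.ae_all_iff.2 fun ξ =>
          aux_slln (p ν) (hp ν) (hp1 ν) (P ν) (hprob ν) (hP ν) ξ
      filter_upwards [h2] with x hx
      simpa [hΞ, Set.mem_iInter] using hx
    have := hprob ν
    have hc : P ν (Ξ ν)ᶜ = 0 := by
      rw [MeasureTheory.ae_iff] at hae
      exact hae
    exact (MeasureTheory.prob_compl_eq_zero_iff (hmeas ν)).1 hc
  have hδ : ∀ ν ν', P ν (Ξ ν') = if ν = ν' then 1 else 0 := by
    intro ν ν'
    by_cases h : ν = ν'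
    · subst h; simp [hone ν]
    · simp only [h, if_false]
      have hsub : Ξ ν' ⊆ (Ξ ν)ᶜ := by
        rw [Set.subset_compl_iff_disjoint_left]
        exact hdisj h
      refine measure_mono_null hsub ?_
      have := hprob ν
      rw [MeasureTheory.prob_compl_eq_zero_iff (hmeas ν)]
      exact hone ν
  refine ⟨Ξ, hmeas, hdisj, hδ, fun ν => ?_⟩
  rw [Measure.finset_sum_apply]
  have : ∀ ν' : N, (ENNReal.ofReal (w ν') • P ν') (Ξ ν)
      = ENNReal.ofReal (w ν') * (if ν' = ν then 1 else 0) := by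
    intro ν'
    rw [Measure.smul_apply, smul_eq_mul, hδ ν' ν]
  rw [Finset.sum_congr rfl fun ν' _ => this ν']
  simp
end

section
/- In the setting of repeated non-demolition measurements with Kraus operators C_ξ = Σ_ν c_ξ(ν)Π_ν, Σ_ξ C_ξ*C_ξ = 1 and p(·|ν) ≠ p(·|ν') for ν≠ν' (where p(ξ|ν)=|c_ξ(ν)|²), the expected off-diagonal norm satisfies E‖Π_ν ρ^{(k)} Π_{ν'}‖ ≤ ‖Π_ν ρ⁰ Π_{ν'}‖ · δ^k for some δ ∈ (0,1), where the expectation is over protocols (ξ_1,…,ξ_k) with the probability μ(ξ_1,…,ξ_k) = Tr(C_{ξ_k}⋯C_{ξ_1}ρ⁰C_{ξ_1}*⋯C_{ξ_k}*), and δ = max_{ν≠ν'} Σ_ξ |c_ξ(ν)||c_ξ(ν')|. -/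
open Matrix
open scoped BigOperators ComplexOrder

/-- The trace norm `‖A‖₁ = Tr √(AᴴA)` of a complex matrix. -/
noncomputable def traceNorm {m : Type*} [Fintype m] [DecidableEq m] (A : Matrix m m ℂ) : ℝ :=
  (((Matrix.posSemidef_conjTranspose_mul_self A).1.eigenvectorUnitary.1 *
      diagonal (((↑) : ℝ → ℂ) ∘ Real.sqrt ∘ (Matrix.posSemidef_conjTranspose_mul_self A).1.eigenvalues) *
      (star (Matrix.posSemidef_conjTranspose_mul_self A).1.eigenvectorUnitary : Matrix m m ℂ)).trace).re

/-- The Kraus operator `C_ξ = ∑_ν c_ξ(ν) P_ν`. -/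
noncomputable def krausOp {σ N m : Type*} [Fintype N] [Fintype m] [DecidableEq m]
    (c : σ → N → ℂ) (P : N → Matrix m m ℂ) (ξ : σ) : Matrix m m ℂ :=
  ∑ ν, c ξ ν • P ν

/-- The ordered product `C_{ξ_k} ⋯ C_{ξ_1}` along a protocol `(ξ_1, …, ξ_k)`. -/
noncomputable def ordProd {σ m : Type*} [Fintype m] [DecidableEq m]
    (C : σ → Matrix m m ℂ) {k : ℕ} (ξs : Fin k → σ) : Matrix m m ℂ :=
  ((List.ofFn fun i => C (ξs i)).reverse).prod

section Helpers

set_option linter.unusedSectionVars false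

lemma real_smul_mat {m : Type*} [Fintype m] (r : ℝ) (A : Matrix m m ℂ) :
    r • A = (r : ℂ) • A := by
  ext i j; simp [Complex.real_smul]

lemma psd_re_diag_nonneg {m : Type*} [Fintype m] [DecidableEq m] {A : Matrix m m ℂ}
    (hA : A.PosSemidef) (i : m) : 0 ≤ (A i i).re := by
  exact (Complex.le_def.mp (hA.diag_nonneg (i := i))).1

lemma psd_trace_re_nonneg {m : Type*} [Fintype m] [DecidableEq m] {A : Matrix m m ℂ}
    (hA : A.PosSemidef) : 0 ≤ A.trace.re := by
  rw [Matrix.trace, Complex.re_sum]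
  exact Finset.sum_nonneg fun i _ => psd_re_diag_nonneg hA i

lemma traceNorm_nonneg {m : Type*} [Fintype m] [DecidableEq m] (A : Matrix m m ℂ) :
    0 ≤ traceNorm A := by
  unfold traceNorm
  rw [Matrix.trace_mul_comm, ← mul_assoc,
    (posSemidef_conjTranspose_mul_self A).1.eigenvectorUnitary.2.1, one_mul, trace_diagonal,
    Complex.re_sum]
  exact Finset.sum_nonneg fun i _ => by simp [Real.sqrt_nonneg]

lemma traceNorm_eq_cfc {m : Type*} [Fintype m] [DecidableEq m] (A : Matrix m m ℂ) :
    traceNorm A = (cfc Real.sqrt (Aᴴ * A)).trace.re := by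
  rw [(posSemidef_conjTranspose_mul_self A).1.cfc_eq]; rfl

lemma psd_smul {m : Type*} [Fintype m] [DecidableEq m] {r : ℝ} (hr : 0 ≤ r)
    {A : Matrix m m ℂ} (hA : A.PosSemidef) : ((r : ℂ) • A).PosSemidef := by
  have hr' : (0 : ℂ) ≤ (r : ℂ) := by exact_mod_cast hr
  exact hA.smul hr'

lemma traceNorm_smul {m : Type*} [Fintype m] [DecidableEq m] (z : ℂ) (A : Matrix m m ℂ) :
    traceNorm (z • A) = ‖z‖ * traceNorm A := by
  have hH : (z • A)ᴴ * (z • A) = (‖z‖ ^ 2 : ℝ) • (Aᴴ * A) := by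
    rw [conjTranspose_smul, smul_mul_smul_comm, real_smul_mat, Complex.star_def,
      Complex.conj_mul', Complex.ofReal_pow]
  rw [traceNorm_eq_cfc, traceNorm_eq_cfc, hH, ← cfc_comp_smul (‖z‖ ^ 2 : ℝ) Real.sqrt (Aᴴ * A)
    (ha := (posSemidef_conjTranspose_mul_self A).1.isSelfAdjoint)]
  have hf : (fun x : ℝ => Real.sqrt ((‖z‖ ^ 2 : ℝ) • x)) = fun x => ‖z‖ * Real.sqrt x := by
    funext x; rw [smul_eq_mul, Real.sqrt_mul (by positivity), Real.sqrt_sq (norm_nonneg _)]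
  rw [hf, cfc_const_mul ‖z‖ Real.sqrt (Aᴴ * A) (by fun_prop), trace_smul, Complex.smul_re, smul_eq_mul]

open scoped RealInnerProductSpace in
lemma overlap_lt_one {σ : Type*} [Fintype σ] (u v : σ → ℝ)
    (hu1 : ∑ ξ, u ξ ^ 2 = 1) (hv1 : ∑ ξ, v ξ ^ 2 = 1)
    (hne : (fun ξ => u ξ ^ 2) ≠ fun ξ => v ξ ^ 2) :
    ∑ ξ, u ξ * v ξ < 1 := by
  set x : EuclideanSpace ℝ σ := (WithLp.equiv 2 (σ → ℝ)).symm u with hx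
  set y : EuclideanSpace ℝ σ := (WithLp.equiv 2 (σ → ℝ)).symm v with hy
  have hxn : ‖x‖ = 1 := by
    rw [EuclideanSpace.norm_eq]
    have : ∀ ξ, ‖x ξ‖ ^ 2 = u ξ ^ 2 := fun ξ => by simp [hx, sq_abs]
    simp_rw [this, hu1, Real.sqrt_one]
  have hyn : ‖y‖ = 1 := by
    rw [EuclideanSpace.norm_eq]
    have : ∀ ξ, ‖y ξ‖ ^ 2 = v ξ ^ 2 := fun ξ => by simp [hy, sq_abs]
    simp_rw [this, hv1, Real.sqrt_one]
  have hinner : ⟪x, y⟫ = ∑ ξ, u ξ * v ξ := by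
    rw [PiLp.inner_apply]; simp [hx, hy, mul_comm]
  have hle : ⟪x, y⟫ ≤ 1 := by
    calc ⟪x, y⟫ ≤ ‖x‖ * ‖y‖ := real_inner_le_norm x y
    _ = 1 := by rw [hxn, hyn, one_mul]
  rw [← hinner]
  rcases lt_or_eq_of_le hle with h | h
  · exact h
  · exfalso
    have hxy : x = y := (inner_eq_one_iff_of_norm_eq_one hxn hyn).mp h
    apply hne
    funext ξ
    have : u ξ = v ξ :=
      congrFun (congrArg (WithLp.equiv 2 (σ → ℝ)) (by rw [hx, hy] at hxy; exact hxy)) ξ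
    rw [this]

variable {σ N m : Type*} [Fintype σ] [Fintype N] [DecidableEq N] [Fintype m] [DecidableEq m]
  (c : σ → N → ℂ) (P : N → Matrix m m ℂ)
  (hherm : ∀ ν, (P ν)ᴴ = P ν)
  (horth : ∀ ν ν', P ν * P ν' = if ν = ν' then P ν else 0)

include horth

lemma P_mul_kraus (ν : N) (ξ : σ) : P ν * krausOp c P ξ = c ξ ν • P ν := by
  unfold krausOp
  rw [Finset.mul_sum]
  rw [Finset.sum_eq_single ν]
  · rw [mul_smul_comm, horth, if_pos rfl]
  · intro b _ hb
    rw [mul_smul_comm, horth, if_neg (Ne.symm hb), smul_zero]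
  · simp

lemma P_mul_listProd (ν : N) (L : List σ) :
    P ν * (L.map (krausOp c P)).prod = (L.map fun ξ => c ξ ν).prod • P ν := by
  induction L with
  | nil => simp
  | cons a L ih =>
      simp only [List.map_cons, List.prod_cons]
      rw [← mul_assoc, P_mul_kraus c P horth, smul_mul_assoc, ih, smul_smul]

lemma ordProd_eq {k : ℕ} (ξs : Fin k → σ) :
    ordProd (krausOp c P) ξs = ((List.ofFn ξs).reverse.map (krausOp c P)).prod := by
  unfold ordProd
  rw [show (List.ofFn fun i => krausOp c P (ξs i)) = (List.ofFn ξs).map (krausOp c P) by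
    rw [List.map_ofFn]; rfl, List.map_reverse]

lemma P_mul_ordProd (ν : N) {k : ℕ} (ξs : Fin k → σ) :
    P ν * ordProd (krausOp c P) ξs
      = (((List.ofFn ξs).reverse.map fun ξ => c ξ ν).prod) • P ν := by
  rw [ordProd_eq c P horth, P_mul_listProd c P horth]

include hherm

lemma kraus_adj_mul (ξ : σ) :
    (krausOp c P ξ)ᴴ * krausOp c P ξ
      = ∑ ν, ((starRingEnd ℂ) (c ξ ν) * c ξ ν) • P ν := by
  unfold krausOp
  rw [conjTranspose_sum, Finset.sum_mul_sum]
  simp_rw [conjTranspose_smul, hherm, smul_mul_smul_comm, horth, smul_ite, smul_zero,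
    Finset.sum_ite_eq, Finset.mem_univ, if_true]
  rfl

lemma sum_abs_sq_eq_one
    (hsum : ∑ ν, P ν = 1) (hne : ∀ ν, P ν ≠ 0)
    (hkraus : ∑ ξ, (krausOp c P ξ)ᴴ * krausOp c P ξ = 1) (ν₀ : N) :
    ∑ ξ, ‖c ξ ν₀‖ ^ 2 = 1 := by
  have h1 : ∑ ν, (∑ ξ, (starRingEnd ℂ) (c ξ ν) * c ξ ν) • P ν = ∑ ν, P ν := by
    rw [hsum, ← hkraus]
    simp_rw [kraus_adj_mul c P hherm horth]
    rw [Finset.sum_comm]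
    simp_rw [Finset.sum_smul]
  have h2 : (∑ ξ, (starRingEnd ℂ) (c ξ ν₀) * c ξ ν₀) • P ν₀ = P ν₀ := by
    have := congrArg (fun M => P ν₀ * M) h1
    simp only [Finset.mul_sum, mul_smul_comm, horth] at this
    simpa [Finset.sum_ite_eq, smul_ite] using this
  have h3 : (∑ ξ, (starRingEnd ℂ) (c ξ ν₀) * c ξ ν₀) = 1 := by
    by_contra h
    have : ((∑ ξ, (starRingEnd ℂ) (c ξ ν₀) * c ξ ν₀) - 1) • P ν₀ = 0 := by
      rw [sub_smul, one_smul, h2, sub_self]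
    rcases smul_eq_zero.mp this with h' | h'
    · exact h (by linear_combination h')
    · exact hne ν₀ h'
  have := congrArg Complex.re h3
  rw [Complex.re_sum] at this
  simp only [Complex.conj_mul', ← Complex.ofReal_pow,
    Complex.ofReal_re, Complex.one_re] at this
  exact this

end Helpers

/-- in the repeated non-demolition measurement model, the expected norm of the
off-diagonal block of the posterior state decays exponentially:
`E‖P_ν ρ⁽ᵏ⁾ P_{ν'}‖ ≤ ‖P_ν ρ⁰ P_{ν'}‖ · δᵏ` for some `δ ∈ (0,1)` dominating all the
overlaps `∑_ξ |c_ξ(ν)||c_ξ(ν')|`, `ν ≠ ν'`. -/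
theorem expected_off_diagonal_decay {σ N m : Type*} [Fintype σ] [Fintype N] [DecidableEq N]
    [Fintype m] [DecidableEq m]
    (c : σ → N → ℂ) (P : N → Matrix m m ℂ)
    (hherm : ∀ ν, (P ν)ᴴ = P ν)
    (horth : ∀ ν ν', P ν * P ν' = if ν = ν' then P ν else 0)
    (hsum : ∑ ν, P ν = 1) (hne : ∀ ν, P ν ≠ 0)
    (hkraus : ∑ ξ, (krausOp c P ξ)ᴴ * krausOp c P ξ = 1)
    (hdist : ∀ ν ν', ν ≠ ν' →
      (fun ξ => ‖c ξ ν‖ ^ 2) ≠ (fun ξ => ‖c ξ ν'‖ ^ 2))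
    (ρ : Matrix m m ℂ) (hρ : ρ.PosSemidef) (hρ1 : ρ.trace = 1) :
    ∃ δ ∈ Set.Ioo (0 : ℝ) 1,
      (∀ ν ν', ν ≠ ν' → ∑ ξ, ‖c ξ ν‖ * ‖c ξ ν'‖ ≤ δ) ∧
      ∀ (ν ν' : N), ν ≠ ν' → ∀ (k : ℕ),
        (∑ ξs : Fin k → σ,
            ((ordProd (krausOp c P) ξs * ρ * (ordProd (krausOp c P) ξs)ᴴ).trace).re *
              traceNorm
                (P ν *
                  ((((ordProd (krausOp c P) ξs * ρ *
                        (ordProd (krausOp c P) ξs)ᴴ).trace).re)⁻¹ •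
                    (ordProd (krausOp c P) ξs * ρ * (ordProd (krausOp c P) ξs)ᴴ)) *
                  P ν'))
          ≤ traceNorm (P ν * ρ * P ν') * δ ^ k := by
  classical
  set s : N → N → ℝ := fun ν ν' => ∑ ξ, ‖c ξ ν‖ * ‖c ξ ν'‖ with hs
  have hsq : ∀ ν, ∑ ξ, ‖c ξ ν‖ ^ 2 = 1 :=
    sum_abs_sq_eq_one c P hherm horth hsum hne hkraus
  have hslt : ∀ ν ν', ν ≠ ν' → s ν ν' < 1 := fun ν ν' h =>
    overlap_lt_one _ _ (hsq ν) (hsq ν') (hdist ν ν' h)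
  have hsnn : ∀ ν ν', 0 ≤ s ν ν' := fun ν ν' =>
    Finset.sum_nonneg fun ξ _ => mul_nonneg (norm_nonneg _) (norm_nonneg _)
  set f : N × N → ℝ := fun p => if p.1 = p.2 then 0 else s p.1 p.2 with hf
  set T : Finset ℝ := insert (1/2 : ℝ) (Finset.image f Finset.univ) with hT
  have hTne : T.Nonempty := ⟨1/2, Finset.mem_insert_self _ _⟩
  set δ : ℝ := T.max' hTne with hδ
  have hhalf : (1/2 : ℝ) ≤ δ := Finset.le_max' _ _ (Finset.mem_insert_self _ _)
  have hδ1 : δ < 1 := by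
    rw [hδ, Finset.max'_lt_iff]
    intro b hb
    rw [hT, Finset.mem_insert] at hb
    rcases hb with rfl | hb
    · norm_num
    · obtain ⟨p, -, rfl⟩ := Finset.mem_image.mp hb
      by_cases hp : p.1 = p.2
      · simp [hf, hp]
      · simpa [hf, hp] using hslt p.1 p.2 hp
  have hδdom : ∀ ν ν', ν ≠ ν' → s ν ν' ≤ δ := by
    intro ν ν' h
    have hmem : f (ν, ν') ∈ T :=
      Finset.mem_insert_of_mem (Finset.mem_image_of_mem f (Finset.mem_univ _))
    have := Finset.le_max' T _ hmem
    simpa [hf, h] using this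
  refine ⟨δ, ⟨lt_of_lt_of_le (by norm_num) hhalf, hδ1⟩, hδdom, ?_⟩
  intro ν ν' hνν' k
  set tn0 := traceNorm (P ν * ρ * P ν') with htn0
  have htn0nn : 0 ≤ tn0 := traceNorm_nonneg _
  have key : ∀ ξs : Fin k → σ,
      ((ordProd (krausOp c P) ξs * ρ * (ordProd (krausOp c P) ξs)ᴴ).trace).re *
        traceNorm
          (P ν *
            ((((ordProd (krausOp c P) ξs * ρ *
                  (ordProd (krausOp c P) ξs)ᴴ).trace).re)⁻¹ •
              (ordProd (krausOp c P) ξs * ρ * (ordProd (krausOp c P) ξs)ᴴ)) *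
            P ν')
      ≤ (∏ i, ‖c (ξs i) ν‖ * ‖c (ξs i) ν'‖) * tn0 := by
    intro ξs
    set B := ordProd (krausOp c P) ξs with hB
    set M := B * ρ * Bᴴ with hM
    have hMpsd : M.PosSemidef := hρ.mul_mul_conjTranspose_same B
    set r := M.trace.re with hr
    have hrnn : 0 ≤ r := psd_trace_re_nonneg hMpsd
    set L := (List.ofFn ξs).reverse with hL
    set α := (L.map fun ξ => c ξ ν).prod with hα
    set β := (L.map fun ξ => c ξ ν').prod with hβ
    have hPB : P ν * B = α • P ν := P_mul_ordProd c P horth ν ξs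
    have hPB' : P ν' * B = β • P ν' := P_mul_ordProd c P horth ν' ξs
    have hBP : Bᴴ * P ν' = (starRingEnd ℂ) β • P ν' := by
      calc Bᴴ * P ν' = (P ν' * B)ᴴ := by rw [conjTranspose_mul, hherm]
      _ = (starRingEnd ℂ) β • P ν' := by
          rw [hPB', conjTranspose_smul, hherm]; rfl
    have hkey : P ν * M * P ν' = (α * (starRingEnd ℂ) β) • (P ν * ρ * P ν') := by
      have h0 : P ν * M * P ν' = (P ν * B) * ρ * (Bᴴ * P ν') := by
        rw [hM]; noncomm_ring
      rw [h0, hPB, hBP, smul_mul_assoc, smul_mul_assoc, mul_smul_comm, smul_smul]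
    have habs : ‖α * (starRingEnd ℂ) β‖
        = ∏ i, ‖c (ξs i) ν‖ * ‖c (ξs i) ν'‖ := by
      rw [norm_mul, Complex.norm_conj, hα, hβ, List.norm_prod, List.norm_prod,
        List.map_map, List.map_map, ← List.prod_map_mul, hL]
      simp [List.map_reverse, List.prod_reverse, List.prod_ofFn, Function.comp]
    have htnM : traceNorm (P ν * M * P ν')
        = (∏ i, ‖c (ξs i) ν‖ * ‖c (ξs i) ν'‖) * tn0 := by
      rw [hkey, traceNorm_smul, habs, htn0]
    have hsmul : P ν * (r⁻¹ • M) * P ν' = ((r⁻¹ : ℝ) : ℂ) • (P ν * M * P ν') := by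
      rw [real_smul_mat, mul_smul_comm, smul_mul_assoc]
    rw [hsmul, traceNorm_smul]
    have habs' : ‖((r⁻¹ : ℝ) : ℂ)‖ = r⁻¹ := by
      rw [Complex.norm_real, Real.norm_eq_abs, abs_of_nonneg (inv_nonneg.mpr hrnn)]
    rw [habs']
    have hrr : r * r⁻¹ ≤ 1 := by
      rcases eq_or_ne r 0 with h | h
      · simp [h]
      · simp [mul_inv_cancel₀ h]
    calc r * (r⁻¹ * traceNorm (P ν * M * P ν'))
        = (r * r⁻¹) * traceNorm (P ν * M * P ν') := by ring
      _ ≤ 1 * traceNorm (P ν * M * P ν') :=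
          mul_le_mul_of_nonneg_right hrr (traceNorm_nonneg _)
      _ = traceNorm (P ν * M * P ν') := one_mul _
      _ = (∏ i, ‖c (ξs i) ν‖ * ‖c (ξs i) ν'‖) * tn0 := htnM
  calc (∑ ξs : Fin k → σ,
          ((ordProd (krausOp c P) ξs * ρ * (ordProd (krausOp c P) ξs)ᴴ).trace).re *
            traceNorm
              (P ν *
                ((((ordProd (krausOp c P) ξs * ρ *
                      (ordProd (krausOp c P) ξs)ᴴ).trace).re)⁻¹ •
                  (ordProd (krausOp c P) ξs * ρ * (ordProd (krausOp c P) ξs)ᴴ)) *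
                P ν'))
      ≤ ∑ ξs : Fin k → σ,
          (∏ i, ‖c (ξs i) ν‖ * ‖c (ξs i) ν'‖) * tn0 :=
        Finset.sum_le_sum fun ξs _ => key ξs
    _ = (s ν ν') ^ k * tn0 := by
        rw [← Finset.sum_mul, hs]
        congr 1
        rw [Fintype.sum_pow]
    _ ≤ δ ^ k * tn0 :=
        mul_le_mul_of_nonneg_right
          (pow_le_pow_left₀ (hsnn ν ν') (hδdom ν ν' hνν') k) htn0nn
    _ = tn0 * δ ^ k := mul_comm _ _
end

section
/- Let H be a finite-dimensional Hilbert space and Φ_* : B(H) → B(H) a unital completely positive map with Kraus representation Φ_*[X] = Σ_α Γ_α* X Γ_α. Suppose there is a faithful state ρ (density matrix with Tr(ρ A*A)=0 ⟹ A=0) that is stationary for the predual, i.e. Tr(ρ Φ_*[X]) = Tr(ρ X) for all X. Then the fixed-point set ker(Φ_* − id) = {A ∈ B(H) : Φ_*[A]=A} equals the commutant {Γ_α}'_α of the Kraus operators. -/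
open Matrix
open scoped BigOperators ComplexOrder

private lemma trace_psd_nonneg {m : Type*} [Fintype m] [DecidableEq m]
    (M : Matrix m m ℂ) (hM : M.PosSemidef) : 0 ≤ M.trace := by
  rw [Matrix.trace]
  apply Finset.sum_nonneg
  intro i _
  exact hM.diag_nonneg

private lemma trace_rho_psd_nonneg {m : Type*} [Fintype m] [DecidableEq m]
    (ρ : Matrix m m ℂ) (hρ : ρ.PosSemidef) (C : Matrix m m ℂ) :
    0 ≤ (ρ * (Cᴴ * C)).trace := by
  open scoped Matrix.Norms.L2Operator MatrixOrder in
  obtain ⟨B, rfl⟩ := CStarAlgebra.nonneg_iff_eq_star_mul_self.mp hρ.nonneg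
  rw [Matrix.star_eq_conjTranspose]
  have h1 : (Bᴴ * B * (Cᴴ * C)).trace = ((C * Bᴴ)ᴴ * (C * Bᴴ)).trace := by
    rw [Matrix.conjTranspose_mul, Matrix.conjTranspose_conjTranspose,
      Matrix.mul_assoc, Matrix.trace_mul_comm Bᴴ]
    congr 1
    noncomm_ring
  rw [h1]
  exact trace_psd_nonneg _ (Matrix.posSemidef_conjTranspose_mul_self _)

/-- let `Φ_*[X] = ∑_α Γ_αᴴ X Γ_α` be a unital completely positive map on
`B(H)`, `H` finite-dimensional, admitting a faithful stationary state `ρ` (density matrix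
with `Tr(ρ AᴴA) = 0 → A = 0` and `Tr(ρ Φ_*[X]) = Tr(ρ X)` for all `X`). Then the
fixed-point set `{A : Φ_*[A] = A}` equals the commutant of the Kraus operators `{Γ_α}`. -/
theorem fixed_points_eq_commutant {ι m : Type*} [Fintype ι] [Fintype m] [DecidableEq m]
    (Γ : ι → Matrix m m ℂ)
    (Φ : Matrix m m ℂ → Matrix m m ℂ)
    (hΦ : ∀ X, Φ X = ∑ α, (Γ α)ᴴ * X * Γ α)
    (hunital : ∑ α, (Γ α)ᴴ * Γ α = 1)
    (ρ : Matrix m m ℂ) (hρ : ρ.PosSemidef) (hρ1 : ρ.trace = 1)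
    (hfaithful : ∀ A : Matrix m m ℂ, (ρ * (Aᴴ * A)).trace = 0 → A = 0)
    (hstat : ∀ X : Matrix m m ℂ, (ρ * Φ X).trace = (ρ * X).trace) :
    {A : Matrix m m ℂ | Φ A = A} = {A : Matrix m m ℂ | ∀ α, A * Γ α = Γ α * A} := by
  ext A
  simp only [Set.mem_setOf_eq]
  constructor
  · intro hA
    -- Aᴴ is also a fixed point
    have hAH : Φ Aᴴ = Aᴴ := by
      have : (Φ A)ᴴ = Φ Aᴴ := by
        rw [hΦ, hΦ, Matrix.conjTranspose_sum]
        refine Finset.sum_congr rfl fun α _ => ?_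
        rw [Matrix.conjTranspose_mul, Matrix.conjTranspose_mul,
          Matrix.conjTranspose_conjTranspose, Matrix.mul_assoc]
      rw [← this, hA]
    -- key identity: ∑ Cᴴ C = Φ[AᴴA] - AᴴA, where C α = Γ α * A - A * Γ α
    set C : ι → Matrix m m ℂ := fun α => Γ α * A - A * Γ α with hC
    have key : ∑ α, (C α)ᴴ * (C α) = Φ (Aᴴ * A) - Aᴴ * A := by
      have expand : ∀ α, (C α)ᴴ * (C α) =
          (Γ α)ᴴ * (Aᴴ * A) * Γ α - Aᴴ * ((Γ α)ᴴ * A * Γ α)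
          - ((Γ α)ᴴ * Aᴴ * Γ α) * A + Aᴴ * ((Γ α)ᴴ * Γ α) * A := by
        intro α
        simp only [hC, Matrix.conjTranspose_sub, Matrix.conjTranspose_mul]
        noncomm_ring
      rw [Finset.sum_congr rfl (fun α _ => expand α)]
      rw [Finset.sum_add_distrib, Finset.sum_sub_distrib, Finset.sum_sub_distrib]
      rw [← Finset.mul_sum, ← Finset.sum_mul]
      have h2 : ∑ α, (Γ α)ᴴ * A * Γ α = A := by rw [← hΦ]; exact hA
      have h3 : ∑ α, (Γ α)ᴴ * Aᴴ * Γ α = Aᴴ := by rw [← hΦ]; exact hAH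
      have h4 : ∑ α, Aᴴ * ((Γ α)ᴴ * Γ α) * A = Aᴴ * A := by
        rw [← Finset.sum_mul, ← Finset.mul_sum, hunital, Matrix.mul_one]
      rw [h2, h3, h4, hΦ]
      abel
    -- trace of key identity against ρ is zero
    have htr : (ρ * ∑ α, (C α)ᴴ * (C α)).trace = 0 := by
      rw [key, Matrix.mul_sub, Matrix.trace_sub, hstat, sub_self]
    -- each summand has nonneg trace, so each is zero
    have htr' : ∑ α, (ρ * ((C α)ᴴ * (C α))).trace = 0 := by
      rw [← Matrix.trace_sum, ← Matrix.mul_sum]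
      exact htr
    have hzero : ∀ α ∈ Finset.univ, (ρ * ((C α)ᴴ * (C α))).trace = 0 := by
      intro α _
      have := (Finset.sum_eq_zero_iff_of_nonneg
        (fun α _ => trace_rho_psd_nonneg ρ hρ (C α))).mp htr' α (Finset.mem_univ α)
      exact this
    intro α
    have := hfaithful (C α) (hzero α (Finset.mem_univ α))
    have h0 : Γ α * A - A * Γ α = 0 := this
    exact (sub_eq_zero.mp h0).symm
  · intro hA
    rw [hΦ]
    calc ∑ α, (Γ α)ᴴ * A * Γ α = ∑ α, (Γ α)ᴴ * Γ α * A := by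
          refine Finset.sum_congr rfl fun α _ => ?_
          rw [Matrix.mul_assoc, hA α, ← Matrix.mul_assoc]
      _ = A := by rw [← Finset.sum_mul, hunital, Matrix.one_mul]
end

section
/- Kadison–Schwarz defect identity for fixed points: let Φ_*[X] = Σ_α Γ_α* X Γ_α be a unital completely positive map on B(H), H finite-dimensional, and let A satisfy Φ_*[A]=A and Φ_*[A*]=A*. Then Φ_*[AA*] − AA* = Σ_α [A*,Γ_α]* [A*,Γ_α], which is in particular a positive operator. -/
open Matrix
open scoped BigOperators ComplexOrder

/-- Kadison–Schwarz defect identity for fixed points: if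
`Φ_*[X] = ∑_α Γ_αᴴ X Γ_α` is unital (`∑_α Γ_αᴴ Γ_α = 1`) and `A` satisfies `Φ_*[A] = A`
and `Φ_*[Aᴴ] = Aᴴ`, then `Φ_*[AAᴴ] − AAᴴ = ∑_α [Aᴴ,Γ_α]ᴴ [Aᴴ,Γ_α]`, which is in
particular a positive semidefinite operator. -/
theorem kadison_schwarz_defect {ι m : Type*} [Fintype ι] [Fintype m] [DecidableEq m]
    (Γ : ι → Matrix m m ℂ)
    (Φ : Matrix m m ℂ → Matrix m m ℂ)
    (hΦ : ∀ X, Φ X = ∑ α, (Γ α)ᴴ * X * Γ α)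
    (hunital : ∑ α, (Γ α)ᴴ * Γ α = 1)
    (A : Matrix m m ℂ) (hA : Φ A = A) (hA' : Φ Aᴴ = Aᴴ) :
    Φ (A * Aᴴ) - A * Aᴴ =
      ∑ α, (Aᴴ * Γ α - Γ α * Aᴴ)ᴴ * (Aᴴ * Γ α - Γ α * Aᴴ) ∧
    (Φ (A * Aᴴ) - A * Aᴴ).PosSemidef := by
  have expand : ∀ α : ι, (Aᴴ * Γ α - Γ α * Aᴴ)ᴴ * (Aᴴ * Γ α - Γ α * Aᴴ) =
      (Γ α)ᴴ * (A * Aᴴ) * Γ α - ((Γ α)ᴴ * A * Γ α) * Aᴴ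
        - A * ((Γ α)ᴴ * Aᴴ * Γ α) + A * ((Γ α)ᴴ * Γ α) * Aᴴ := by
    intro α
    simp only [conjTranspose_sub, conjTranspose_mul, conjTranspose_conjTranspose]
    noncomm_ring
  have key : Φ (A * Aᴴ) - A * Aᴴ =
      ∑ α, (Aᴴ * Γ α - Γ α * Aᴴ)ᴴ * (Aᴴ * Γ α - Γ α * Aᴴ) := by
    simp_rw [expand]
    rw [Finset.sum_add_distrib, Finset.sum_sub_distrib, Finset.sum_sub_distrib,
      ← Finset.sum_mul, ← Finset.mul_sum, ← Finset.sum_mul, ← Finset.mul_sum]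
    rw [← hΦ, ← hΦ, ← hΦ, hA, hA', hunital, mul_one]
    abel
  refine ⟨key, key ▸ ?_⟩
  exact Finset.sum_induction _ _ (fun a b ha hb => ha.add hb) (PosSemidef.zero)
    (fun α _ => posSemidef_conjTranspose_mul_self _)
end

section
/- Let Φ_{*ξ}, ξ∈σ (σ finite), be completely positive maps on B(H) (H finite-dimensional) with Φ_*(σ) := Σ_ξ Φ_{*ξ} unital, commuting pairwise (Φ_{*ξ}∘Φ_{*ξ'} = Φ_{*ξ'}∘Φ_{*ξ}), and assume Φ(σ) = Φ_*(σ)* has a faithful stationary state. Then the operators Φ_{*ξ}[1], ξ∈σ, commute pairwise: [Φ_{*ξ}[1], Φ_{*ξ'}[1]] = 0. -/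
open Matrix
open scoped BigOperators ComplexOrder

/-- A linear map on matrices is completely positive if all its finite amplifications
`Φ ⊗ id_n` preserve positive semidefiniteness. -/
def IsCompletelyPositive {m : Type*} [Fintype m] [DecidableEq m]
    (Φ : Matrix m m ℂ →ₗ[ℂ] Matrix m m ℂ) : Prop :=
  ∀ (n : ℕ) (A : Matrix (m × Fin n) (m × Fin n) ℂ), A.PosSemidef →
    (Matrix.of fun p q : m × Fin n =>
      Φ (Matrix.of fun a b => A (a, p.2) (b, q.2)) p.1 q.1).PosSemidef

lemma kraus {m : Type*} [Fintype m] [DecidableEq m]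
    (Φ : Matrix m m ℂ →ₗ[ℂ] Matrix m m ℂ) (hΦ : IsCompletelyPositive Φ) :
    ∃ V : (m × Fin (Fintype.card m)) → Matrix m m ℂ,
      ∀ X, Φ X = ∑ k, V k * X * (V k)ᴴ := by
  classical
  set n := Fintype.card m with hn
  set e : m ≃ Fin n := Fintype.equivFin m with he
  set u : (m × Fin n) → ℂ := fun p => if e.symm p.2 = p.1 then 1 else 0 with hu
  set A : Matrix (m × Fin n) (m × Fin n) ℂ := Matrix.of (fun p q => u p * star (u q)) with hA
  have hApsd : A.PosSemidef := by
    have : A = (Matrix.replicateCol Unit u) * (Matrix.replicateCol Unit u)ᴴ := by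
      ext p q
      simp [hA, Matrix.mul_apply, Matrix.replicateCol, Matrix.conjTranspose_apply]
    rw [this]
    exact Matrix.posSemidef_self_mul_conjTranspose _
  have hC := hΦ n A hApsd
  obtain ⟨B, hB⟩ : ∃ B : Matrix (m × Fin n) (m × Fin n) ℂ, _ = Bᴴ * B := by
    open scoped MatrixOrder Matrix.Norms.L2Operator in
    obtain ⟨B, hB⟩ := CStarAlgebra.nonneg_iff_eq_star_mul_self.mp hC.nonneg
    exact ⟨B, hB⟩
  -- the inner matrix is a std basis matrix
  have hinner : ∀ i j : Fin n, (Matrix.of fun a b => A (a, i) (b, j))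
      = Matrix.single (e.symm i) (e.symm j) (1 : ℂ) := by
    intro i j
    ext a b
    simp only [hA, Matrix.of_apply, hu, Matrix.single]
    by_cases h1 : e.symm i = a <;> by_cases h2 : e.symm j = b <;>
      simp [h1, h2, eq_comm, and_comm] 
  set V : (m × Fin n) → Matrix m m ℂ := fun k => Matrix.of fun a b => star (B k (a, e b)) with hV
  refine ⟨V, fun X => ?_⟩
  have hstd : ∀ (b d : m) (a c : m),
      Φ (Matrix.single b d (1 : ℂ)) a c = ∑ k, V k a b * star (V k c d) := by
    intro b d a c
    have h1 : Φ (Matrix.single b d (1 : ℂ)) a c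
        = (Matrix.of fun p q : m × Fin n =>
            Φ (Matrix.of fun a b => A (a, p.2) (b, q.2)) p.1 q.1) (a, e b) (c, e d) := by
      simp [hinner (e b) (e d)]
    rw [h1, hB]
    simp only [Matrix.mul_apply, Matrix.conjTranspose_apply, hV, Matrix.of_apply, star_star]
  ext a c
  have key : ∀ b d : m, Φ (Matrix.single b d (X b d)) a c
      = ∑ k, V k a b * X b d * star (V k c d) := by
    intro b d
    rw [show Matrix.single b d (X b d) = X b d • Matrix.single b d (1:ℂ) by
      rw [Matrix.smul_single, smul_eq_mul, mul_one], LinearMap.map_smul]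
    rw [Matrix.smul_apply, hstd, smul_eq_mul, Finset.mul_sum]
    exact Finset.sum_congr rfl fun k _ => by ring
  have rhs : ∀ k, (V k * X * (V k)ᴴ) a c = ∑ b, ∑ d, V k a b * X b d * star (V k c d) := by
    intro k
    simp only [Matrix.mul_apply, Matrix.conjTranspose_apply, Finset.sum_mul]
    rw [Finset.sum_comm]
  conv_lhs => rw [Matrix.matrix_eq_sum_single X]
  rw [map_sum, Matrix.sum_apply]
  simp only [map_sum, Matrix.sum_apply, key]
  simp only [rhs]
  exact (Finset.sum_congr rfl fun b _ => Finset.sum_comm).trans Finset.sum_comm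

lemma trace_rho_DDH {m : Type*} [Fintype m] (ρ D : Matrix m m ℂ) :
    (ρ * (D * Dᴴ)).trace = ∑ j, star (fun a => D a j) ⬝ᵥ ρ *ᵥ (fun a => D a j) := by
  rw [← Matrix.mul_assoc, Matrix.trace_mul_comm]
  simp only [Matrix.trace, Matrix.diag, Matrix.mul_apply, Matrix.conjTranspose_apply,
    dotProduct, Matrix.mulVec, Pi.star_apply]

lemma aux_nonneg {m : Type*} [Fintype m] {ρ : Matrix m m ℂ} (hρ : ρ.PosDef)
    (D : Matrix m m ℂ) : 0 ≤ (ρ * (D * Dᴴ)).trace := by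
  rw [trace_rho_DDH]
  exact Finset.sum_nonneg fun j _ => hρ.posSemidef.dotProduct_mulVec_nonneg _

lemma aux_zero {m : Type*} [Fintype m] {ρ : Matrix m m ℂ} (hρ : ρ.PosDef)
    (D : Matrix m m ℂ) (h : (ρ * (D * Dᴴ)).trace = 0) : D = 0 := by
  rw [trace_rho_DDH] at h
  have h2 := (Finset.sum_eq_zero_iff_of_nonneg (fun j _ => hρ.posSemidef.dotProduct_mulVec_nonneg _)).mp h
  have hcol : ∀ j, (fun a => D a j) = 0 := by
    intro j
    by_contra hne
    exact absurd (h2 j (Finset.mem_univ j)) (ne_of_gt (hρ.dotProduct_mulVec_pos hne))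
  ext a j
  exact congrFun (hcol j) a

/-- let `Φ_{*ξ}`, `ξ ∈ σ` finite, be completely positive maps on `B(H)`
(`H` finite-dimensional) with `∑_ξ Φ_{*ξ}[1] = 1`, commuting pairwise, and such that the
dual map of `∑_ξ Φ_{*ξ}` has a faithful (full-rank) stationary state `ρ`. Then the
operators `Φ_{*ξ}[1]` commute pairwise. -/
theorem phi_one_commute {σ m : Type*} [Fintype σ] [Fintype m] [DecidableEq m]
    (Φ : σ → (Matrix m m ℂ →ₗ[ℂ] Matrix m m ℂ))
    (hCP : ∀ ξ, IsCompletelyPositive (Φ ξ))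
    (hunital : ∑ ξ, Φ ξ 1 = 1)
    (hcomm : ∀ ξ ξ', (Φ ξ).comp (Φ ξ') = (Φ ξ').comp (Φ ξ))
    (ρ : Matrix m m ℂ) (hρ : ρ.PosDef) (hρ1 : ρ.trace = 1)
    (hstat : ∀ X : Matrix m m ℂ, (ρ * (∑ ξ, Φ ξ X)).trace = (ρ * X).trace) :
    ∀ ξ ξ', Φ ξ 1 * Φ ξ' 1 - Φ ξ' 1 * Φ ξ 1 = 0 := by
  classical
  choose V hV using fun ξ => kraus (Φ ξ) (hCP ξ)
  intro ξ ξ'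
  set X : Matrix m m ℂ := Φ ξ 1 with hX
  have hXh : Xᴴ = X := by
    rw [hX, hV ξ]
    rw [Matrix.conjTranspose_sum]
    refine Finset.sum_congr rfl fun k _ => ?_
    simp [Matrix.conjTranspose_mul]
  have hfix : ∑ ζ, Φ ζ X = X := by
    have h1 : ∀ ζ, Φ ζ (Φ ξ 1) = Φ ξ (Φ ζ 1) := fun ζ => DFunLike.congr_fun (hcomm ζ ξ) 1
    calc ∑ ζ, Φ ζ X = ∑ ζ, Φ ξ (Φ ζ 1) := Finset.sum_congr rfl fun ζ _ => h1 ζ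
      _ = Φ ξ (∑ ζ, Φ ζ 1) := (map_sum _ _ _).symm
      _ = X := by rw [hunital]
  set D : (ζ : σ) → (m × Fin (Fintype.card m)) → Matrix m m ℂ :=
    fun ζ k => V ζ k * X - X * V ζ k with hD
  have hsum : ∑ ζ, ∑ k, D ζ k * (D ζ k)ᴴ = (∑ ζ, Φ ζ (X * X)) - X * X := by
    have expand : ∀ ζ k, D ζ k * (D ζ k)ᴴ
        = V ζ k * (X * X) * (V ζ k)ᴴ - (V ζ k * X * (V ζ k)ᴴ) * X
          - X * (V ζ k * X * (V ζ k)ᴴ) + X * (V ζ k * 1 * (V ζ k)ᴴ) * X := by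
      intro ζ k
      rw [hD]
      simp only [Matrix.conjTranspose_sub, Matrix.conjTranspose_mul, hXh]
      noncomm_ring
    calc ∑ ζ, ∑ k, D ζ k * (D ζ k)ᴴ
        = ∑ ζ, (Φ ζ (X * X) - Φ ζ X * X - X * Φ ζ X + X * Φ ζ 1 * X) := by
          refine Finset.sum_congr rfl fun ζ _ => ?_
          rw [Finset.sum_congr rfl fun k _ => expand ζ k]
          simp only [Finset.sum_add_distrib, Finset.sum_sub_distrib, ← Finset.sum_mul,
            ← Finset.mul_sum, ← hV]
      _ = (∑ ζ, Φ ζ (X * X)) - (∑ ζ, Φ ζ X) * X - X * (∑ ζ, Φ ζ X)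
            + X * (∑ ζ, Φ ζ 1) * X := by
          simp only [Finset.sum_add_distrib, Finset.sum_sub_distrib, ← Finset.sum_mul,
            ← Finset.mul_sum]
      _ = (∑ ζ, Φ ζ (X * X)) - X * X := by
          rw [hfix, hunital, mul_one]
          noncomm_ring
  have htr : ∑ ζ, ∑ k, (ρ * (D ζ k * (D ζ k)ᴴ)).trace = 0 := by
    have h0 : (ρ * ((∑ ζ, Φ ζ (X * X)) - X * X)).trace = 0 := by
      rw [Matrix.mul_sub, Matrix.trace_sub, hstat (X * X), sub_self]
    calc ∑ ζ, ∑ k, (ρ * (D ζ k * (D ζ k)ᴴ)).trace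
        = (ρ * (∑ ζ, ∑ k, D ζ k * (D ζ k)ᴴ)).trace := by
          simp only [Finset.mul_sum, Matrix.trace_sum]
      _ = 0 := by rw [hsum, h0]
  have hzero : ∀ ζ k, V ζ k * X = X * V ζ k := by
    intro ζ k
    have h1 := (Finset.sum_eq_zero_iff_of_nonneg
        (fun ζ _ => Finset.sum_nonneg fun k _ => aux_nonneg hρ _)).mp htr ζ (Finset.mem_univ ζ)
    have h2 := (Finset.sum_eq_zero_iff_of_nonneg
        (fun k _ => aux_nonneg hρ _)).mp h1 k (Finset.mem_univ k)
    have h3 := aux_zero hρ _ h2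
    rw [hD] at h3
    exact sub_eq_zero.mp h3
  have hXVH : ∀ k, X * (V ξ' k)ᴴ = (V ξ' k)ᴴ * X := by
    intro k
    have h1 := congrArg Matrix.conjTranspose (hzero ξ' k)
    rw [Matrix.conjTranspose_mul, Matrix.conjTranspose_mul, hXh] at h1
    exact h1
  have key : X * Φ ξ' 1 = Φ ξ' 1 * X := by
    rw [hV ξ']
    rw [Finset.mul_sum, Finset.sum_mul]
    refine Finset.sum_congr rfl fun k _ => ?_
    rw [mul_one, ← Matrix.mul_assoc, ← hzero ξ' k, Matrix.mul_assoc, hXVH k,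
      ← Matrix.mul_assoc]
  rw [key, sub_self]
end

section
/- In the setting of the previous statement, let 1 = Σ_ν Π_ν be the joint spectral decomposition of the commuting family {Φ_{*ξ}[1]}_{ξ∈σ}, with Φ_{*ξ}[1] = Σ_ν p(ξ|ν)Π_ν. Then Φ_{*ξ}[Π_ν] = p(ξ|ν)Π_ν with p(ξ|ν) ≥ 0, for each ν the map ξ ↦ p(ξ|ν) is a probability distribution on σ, and for distinct joint-eigenvalue labels ν ≠ ν' there exists ξ with p(ξ|ν) ≠ p(ξ|ν'). -/
open Matrix
open scoped BigOperators ComplexOrder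

set_option linter.unusedSectionVars false
set_option maxHeartbeats 1000000

namespace SpecAux

variable {m : Type*} [Fintype m] [DecidableEq m]

lemma psd_trace_nonneg {A : Matrix m m ℂ} (hA : A.PosSemidef) : 0 ≤ A.trace := by
  have h : ∀ i, 0 ≤ A i i := by
    intro i
    have := hA.dotProduct_mulVec_nonneg (Pi.single i 1)
    simpa [dotProduct, mulVec, Pi.single_apply] using this
  exact Finset.sum_nonneg fun i _ => h i

lemma trace_conj_self_eq_zero {B : Matrix m m ℂ} (h : (Bᴴ * B).trace = 0) : B = 0 := by
  have h' : ∑ i, ∑ j, star (B j i) * B j i = 0 := by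
    simpa [Matrix.trace, Matrix.diag, Matrix.mul_apply] using h
  have hnn : ∀ i ∈ Finset.univ, (0:ℂ) ≤ ∑ j, star (B j i) * B j i := by
    intro i _
    exact Finset.sum_nonneg fun j _ => star_mul_self_nonneg _
  have h0 : ∀ i ∈ Finset.univ, ∑ j, star (B j i) * B j i = 0 :=
    (Finset.sum_eq_zero_iff_of_nonneg hnn).mp h'
  ext j i
  have hnn' : ∀ j' ∈ Finset.univ, (0:ℂ) ≤ star (B j' i) * B j' i :=
    fun j' _ => star_mul_self_nonneg _
  have := (Finset.sum_eq_zero_iff_of_nonneg hnn').mp (h0 i (Finset.mem_univ i)) j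
    (Finset.mem_univ j)
  have h2 : B j i * star (B j i) = 0 := by rw [mul_comm]; exact this
  rw [Complex.star_def, Complex.mul_conj] at h2
  exact_mod_cast Complex.normSq_eq_zero.mp (by exact_mod_cast h2)

open scoped MatrixOrder in
lemma psd_sqrt_exists {A : Matrix m m ℂ} (hA : A.PosSemidef) :
    ∃ S : Matrix m m ℂ, S * S = A ∧ Sᴴ = S := by
  have h0 : 0 ≤ A := hA.nonneg
  refine ⟨CFC.sqrt A, CFC.sqrt_mul_sqrt_self A h0, ?_⟩
  exact (CFC.sqrt_nonneg A).posSemidef.isHermitian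

lemma psd_trace_eq_zero {A : Matrix m m ℂ} (hA : A.PosSemidef) (h : A.trace = 0) : A = 0 := by
  classical
  obtain ⟨S, hs, hherm⟩ := psd_sqrt_exists hA
  have : (Sᴴ * S).trace = 0 := by rw [hherm, hs, h]
  have h0 : S = 0 := trace_conj_self_eq_zero this
  rw [← hs, h0, mul_zero]

lemma psd_of_neg_psd {A : Matrix m m ℂ} (h1 : A.PosSemidef) (h2 : (-A).PosSemidef) : A = 0 := by
  apply psd_trace_eq_zero h1
  have a1 := psd_trace_nonneg h1
  have a2 := psd_trace_nonneg h2
  rw [Matrix.trace_neg, neg_nonneg] at a2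
  exact le_antisymm a2 a1

lemma psd_sum {ι : Type*} (s : Finset ι) (f : ι → Matrix m m ℂ)
    (h : ∀ i ∈ s, (f i).PosSemidef) : (∑ i ∈ s, f i).PosSemidef :=
  Finset.sum_induction f (fun M => M.PosSemidef) (fun _ _ ha hb => ha.add hb)
    Matrix.PosSemidef.zero h

/-- CP maps are positive. -/
lemma cp_pos {Φ : Matrix m m ℂ →ₗ[ℂ] Matrix m m ℂ} (hΦ : IsCompletelyPositive Φ)
    {X : Matrix m m ℂ} (hX : X.PosSemidef) : (Φ X).PosSemidef := by
  classical
  let e : m × Fin 1 ≃ m := Equiv.prodUnique m (Fin 1)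
  have hA : (X.submatrix e e).PosSemidef := hX.submatrix e
  have h := hΦ 1 (X.submatrix e e) hA
  have hinner : ∀ p q : m × Fin 1,
      (Matrix.of fun a b => (X.submatrix e e) (a, p.2) (b, q.2)) = X := by
    intro p q; ext a b; simp [e]
  have heq : (Matrix.of fun p q : m × Fin 1 =>
      Φ (Matrix.of fun a b => (X.submatrix e e) (a, p.2) (b, q.2)) p.1 q.1) =
      (Φ X).submatrix e e := by
    ext p q
    rw [Matrix.of_apply, hinner p q, Matrix.submatrix_apply]
    rfl
  rw [heq] at h
  exact (Matrix.posSemidef_submatrix_equiv e).mp h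

def sumFin2 (m : Type*) : m ⊕ m ≃ m × Fin 2 where
  toFun := Sum.elim (fun a => (a, 0)) (fun a => (a, 1))
  invFun p := if p.2 = 0 then Sum.inl p.1 else Sum.inr p.1
  left_inv := by rintro (a | a) <;> simp
  right_inv := by rintro ⟨a, i⟩; fin_cases i <;> simp

/-- The 2-amplification of a CP map applied to the Gram block matrix of `blk`. -/
lemma amp2 {Φ : Matrix m m ℂ →ₗ[ℂ] Matrix m m ℂ} (hΦ : IsCompletelyPositive Φ)
    (blk : Fin 2 → Matrix m m ℂ) :
    (Matrix.of fun p q : m × Fin 2 => Φ ((blk p.2)ᴴ * blk q.2) p.1 q.1).PosSemidef := by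
  classical
  set C : Matrix (m × Fin 2) (m × Fin 2) ℂ :=
    Matrix.of (fun r q => if r.2 = (0 : Fin 2) then blk q.2 r.1 q.1 else 0) with hC
  have hA : (Cᴴ * C).PosSemidef := Matrix.posSemidef_conjTranspose_mul_self C
  have h := hΦ 2 (Cᴴ * C) hA
  have hinner : ∀ p q : m × Fin 2,
      (Matrix.of fun a b => (Cᴴ * C) (a, p.2) (b, q.2)) = (blk p.2)ᴴ * blk q.2 := by
    intro p q
    ext a b
    simp only [Matrix.of_apply, Matrix.mul_apply, Matrix.conjTranspose_apply, hC]
    rw [Fintype.sum_prod_type]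
    simp [Fin.sum_univ_two]
  have heq : (Matrix.of fun p q : m × Fin 2 =>
      Φ (Matrix.of fun a b => (Cᴴ * C) (a, p.2) (b, q.2)) p.1 q.1) =
      Matrix.of fun p q : m × Fin 2 => Φ ((blk p.2)ᴴ * blk q.2) p.1 q.1 := by
    ext p q
    rw [Matrix.of_apply, Matrix.of_apply, hinner p q]
  rw [heq] at h
  exact h

/-- Kadison–Schwarz for hermitian elements, for unital CP maps. -/
lemma kadison_schwarz {T : Matrix m m ℂ →ₗ[ℂ] Matrix m m ℂ} (hT : IsCompletelyPositive T)
    (hT1 : T 1 = 1) {Z : Matrix m m ℂ} (hZ : Zᴴ = Z) :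
    (T (Z * Z) - T Z * T Z).PosSemidef := by
  classical
  have hM := amp2 hT ![Z, 1]
  set M : Matrix (m × Fin 2) (m × Fin 2) ℂ :=
    Matrix.of (fun p q : m × Fin 2 => T ((![Z, 1] p.2)ᴴ * ![Z, 1] q.2) p.1 q.1) with hMdef
  have hM' : (M.submatrix (sumFin2 m) (sumFin2 m)).PosSemidef := hM.submatrix _
  have hblocks : M.submatrix (sumFin2 m) (sumFin2 m) =
      Matrix.fromBlocks (T (Z * Z)) (T Z) (T Z) 1 := by
    ext (a | a) (b | b) <;>
      simp [M, sumFin2, Matrix.fromBlocks, hZ, hT1, Matrix.one_apply]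
  rw [hblocks] at hM'
  have hTZherm : (T Z)ᴴ = T Z := by
    have := hM'.isHermitian
    rw [Matrix.isHermitian_fromBlocks_iff] at this
    exact this.2.1
  have hM'' : (Matrix.fromBlocks (T (Z * Z)) (T Z) (T Z)ᴴ 1).PosSemidef := by
    rw [hTZherm]; exact hM'
  have h1 : (1 : Matrix m m ℂ).PosDef := Matrix.PosDef.one
  have : Invertible (1 : Matrix m m ℂ) := invertibleOne
  have := (Matrix.PosDef.fromBlocks₂₂ (T (Z * Z)) (T Z) h1).mp hM''
  simpa [hTZherm, inv_one, Matrix.mul_one] using this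

lemma psd_posdef_trace_zero {ρ Y : Matrix m m ℂ} (hρ : ρ.PosDef) (hY : Y.PosSemidef)
    (h : (ρ * Y).trace = 0) : Y = 0 := by
  classical
  obtain ⟨S, hSS, hSherm⟩ := psd_sqrt_exists hY
  have h1 : (S * ρ * S).trace = 0 := by
    have : (ρ * Y).trace = (S * ρ * S).trace := by
      rw [← hSS, ← Matrix.mul_assoc, Matrix.trace_mul_comm (ρ * S) S, ← Matrix.mul_assoc]
    rw [← this, h]
  have h2 : (S * ρ * S).PosSemidef := by
    have := hρ.posSemidef.conjTranspose_mul_mul_same S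
    rwa [hSherm] at this
  have h3 : S * ρ * S = 0 := psd_trace_eq_zero h2 h1
  have hSv : ∀ v : m → ℂ, S *ᵥ v = 0 := by
    intro v
    by_contra hv
    have hpos := hρ.dotProduct_mulVec_pos (x := S *ᵥ v) hv
    have h0 : star v ⬝ᵥ (S * ρ * S) *ᵥ v = 0 := by
      have := congrArg (fun M => star v ⬝ᵥ M *ᵥ v) h3
      simpa using this
    have key : star (S *ᵥ v) ⬝ᵥ ρ *ᵥ (S *ᵥ v) = star v ⬝ᵥ (S * ρ * S) *ᵥ v := by
      simp [star_mulVec, hSherm, Matrix.dotProduct_mulVec, Matrix.mulVec_mulVec,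
        Matrix.mul_assoc, Matrix.vecMul_vecMul]
    rw [key, h0] at hpos
    exact lt_irrefl _ hpos
  have hS0 : S = 0 := by
    ext i j
    have := congrFun (hSv (Pi.single j 1)) i
    simpa [mulVec, dotProduct, Pi.single_apply] using this
  rw [← hSS, hS0, mul_zero]

lemma sandwich {Pm B : Matrix m m ℂ} (hPh : Pmᴴ = Pm) (hPi : Pm * Pm = Pm)
    (hB : B.PosSemidef) (hrest : (Pm - B).PosSemidef) :
    B = Pm * B * Pm := by
  classical
  suffices hmain : ∀ Q : Matrix m m ℂ, Qᴴ = Q → Q * Pm = 0 → Pm * Q = 0 → Pm + Q = 1 →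
      B = Pm * B * Pm by
    refine hmain (1 - Pm) ?_ ?_ ?_ ?_
    · rw [conjTranspose_sub, conjTranspose_one, hPh]
    · rw [sub_mul, one_mul, hPi, sub_self]
    · rw [mul_sub, mul_one, hPi, sub_self]
    · abel
  intro Q hQh hQP hPQ hPmQ
  have hQBQpos : (Q * B * Q).PosSemidef := by
    have := hB.conjTranspose_mul_mul_same Q
    rwa [hQh] at this
  have hQBQneg : (-(Q * B * Q)).PosSemidef := by
    have := hrest.conjTranspose_mul_mul_same Q
    rw [hQh] at this
    have heq : Q * (Pm - B) * Q = -(Q * B * Q) := by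
      rw [mul_sub, sub_mul, hQP, zero_mul, zero_sub]
    rwa [heq] at this
  have hQBQ : Q * B * Q = 0 := psd_of_neg_psd hQBQpos hQBQneg
  obtain ⟨S, hSS, hSherm⟩ := psd_sqrt_exists hB
  have hSQ : S * Q = 0 := by
    apply trace_conj_self_eq_zero
    rw [← Matrix.trace_zero m ℂ]
    congr 1
    rw [conjTranspose_mul, hSherm, hQh, Matrix.mul_assoc, ← Matrix.mul_assoc S S Q, hSS,
      ← Matrix.mul_assoc]
    exact hQBQ
  have hBQ : B * Q = 0 := by rw [← hSS, Matrix.mul_assoc, hSQ, mul_zero]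
  have hQB : Q * B = 0 := by
    have := congrArg conjTranspose hBQ
    rwa [conjTranspose_mul, hQh, hB.isHermitian.eq, conjTranspose_zero] at this
  calc B = (Pm + Q) * B * (Pm + Q) := by rw [hPmQ, one_mul, mul_one]
    _ = Pm * B * Pm := by
        rw [add_mul, hQB, add_zero, mul_add, Matrix.mul_assoc Pm B Q, hBQ, mul_zero, add_zero]

end SpecAux

/-- in the setting of Statement 14, let `1 = ∑_ν P_ν` be the joint spectral
decomposition of the commuting family `{Φ_{*ξ}[1]}`, with `Φ_{*ξ}[1] = ∑_ν p(ξ|ν) P_ν`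
(distinct labels carrying distinct joint eigenvalue vectors). Then
`Φ_{*ξ}[P_ν] = p(ξ|ν) P_ν` with `p(ξ|ν) ≥ 0`, for each `ν` the map `ξ ↦ p(ξ|ν)` is a
probability distribution on `σ`, and for `ν ≠ ν'` there is `ξ` with `p(ξ|ν) ≠ p(ξ|ν')`. -/
theorem spectral_decomposition_of_nondemolition {σ N m : Type*} [Fintype σ] [Fintype N]
    [DecidableEq N] [Fintype m] [DecidableEq m]
    (Φ : σ → (Matrix m m ℂ →ₗ[ℂ] Matrix m m ℂ))
    (hCP : ∀ ξ, IsCompletelyPositive (Φ ξ))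
    (hunital : ∑ ξ, Φ ξ 1 = 1)
    (hcomm : ∀ ξ ξ', (Φ ξ).comp (Φ ξ') = (Φ ξ').comp (Φ ξ))
    (ρ : Matrix m m ℂ) (hρ : ρ.PosDef) (hρ1 : ρ.trace = 1)
    (hstat : ∀ X : Matrix m m ℂ, (ρ * (∑ ξ, Φ ξ X)).trace = (ρ * X).trace)
    (P : N → Matrix m m ℂ) (p : σ → N → ℝ)
    (hherm : ∀ ν, (P ν)ᴴ = P ν)
    (horth : ∀ ν ν', P ν * P ν' = if ν = ν' then P ν else 0)
    (hP1 : ∑ ν, P ν = 1) (hPne : ∀ ν, P ν ≠ 0)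
    (hspec : ∀ ξ, Φ ξ 1 = ∑ ν, (p ξ ν : ℂ) • P ν)
    (hjoint : ∀ ν ν', (∀ ξ, p ξ ν = p ξ ν') → ν = ν') :
    (∀ ξ ν, Φ ξ (P ν) = (p ξ ν : ℂ) • P ν) ∧
    (∀ ξ ν, 0 ≤ p ξ ν) ∧
    (∀ ν, ∑ ξ, p ξ ν = 1) ∧
    (∀ ν ν', ν ≠ ν' → ∃ ξ, p ξ ν ≠ p ξ ν') := by
  classical
  -- The total map T = ∑ ξ Φ ξ
  set T : Matrix m m ℂ →ₗ[ℂ] Matrix m m ℂ := ∑ ξ, Φ ξ with hTdef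
  have hTapp : ∀ X, T X = ∑ ξ, Φ ξ X := fun X => by
    rw [hTdef, LinearMap.sum_apply]
  have hTCP : IsCompletelyPositive T := by
    intro n A hA
    have heq : (Matrix.of fun p q : m × Fin n =>
        T (Matrix.of fun a b => A (a, p.2) (b, q.2)) p.1 q.1) =
        ∑ ξ, Matrix.of fun p q : m × Fin n =>
          Φ ξ (Matrix.of fun a b => A (a, p.2) (b, q.2)) p.1 q.1 := by
      ext p q
      simp [hTapp, Matrix.sum_apply]
    rw [heq]
    exact SpecAux.psd_sum _ _ fun ξ _ => hCP ξ n A hA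
  have hT1 : T 1 = 1 := by rw [hTapp]; exact hunital
  have hstatT : ∀ X, (ρ * T X).trace = (ρ * X).trace := fun X => by
    rw [hTapp]; exact hstat X
  -- Fixed points of T are closed under squaring (hence products of commuting hermitians)
  have hfix_sq : ∀ Z : Matrix m m ℂ, Zᴴ = Z → T Z = Z → T (Z * Z) = Z * Z := by
    intro Z hZh hZf
    have hKS := SpecAux.kadison_schwarz hTCP hT1 hZh
    rw [hZf] at hKS
    have htr : (ρ * (T (Z * Z) - Z * Z)).trace = 0 := by
      rw [Matrix.mul_sub, Matrix.trace_sub, hstatT (Z * Z), sub_self]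
    have := SpecAux.psd_posdef_trace_zero hρ hKS htr
    exact sub_eq_zero.mp this
  have hfix_mul : ∀ X Y : Matrix m m ℂ, Xᴴ = X → Yᴴ = Y → X * Y = Y * X →
      T X = X → T Y = Y → T (X * Y) = X * Y := by
    intro X Y hXh hYh hcom hXf hYf
    have hXY : (X + Y)ᴴ = X + Y := by rw [conjTranspose_add, hXh, hYh]
    have hXYf : T (X + Y) = X + Y := by rw [map_add, hXf, hYf]
    have h1 := hfix_sq (X + Y) hXY hXYf
    have h2 := hfix_sq X hXh hXf
    have h3 := hfix_sq Y hYh hYf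
    have hexp : (X + Y) * (X + Y) = X * X + Y * Y + (X * Y + X * Y) := by
      rw [add_mul, mul_add, mul_add, ← hcom]; abel
    rw [hexp] at h1
    simp only [map_add] at h1
    rw [h2, h3] at h1
    have h4 : T (X * Y) + T (X * Y) = X * Y + X * Y := add_left_cancel h1
    have h5 : (2 : ℂ) • T (X * Y) = (2 : ℂ) • (X * Y) := by
      rw [two_smul, two_smul]; exact h4
    exact smul_right_injective _ (by norm_num : (2:ℂ) ≠ 0) h5
  -- each Φ ξ 1 is a fixed point of T
  have hAfix : ∀ ξ, T (Φ ξ 1) = Φ ξ 1 := by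
    intro ξ
    rw [hTapp]
    have hc : ∀ ξ', Φ ξ' (Φ ξ 1) = Φ ξ (Φ ξ' 1) := by
      intro ξ'
      have := congrArg (fun L => L 1) (hcomm ξ' ξ)
      simpa [LinearMap.comp_apply] using this
    calc ∑ ξ', Φ ξ' (Φ ξ 1) = ∑ ξ', Φ ξ (Φ ξ' 1) :=
          Finset.sum_congr rfl (fun ξ' _ => hc ξ')
      _ = Φ ξ (∑ ξ', Φ ξ' 1) := (map_sum _ _ _).symm
      _ = Φ ξ 1 := by rw [hunital]
  -- the commutative "diagonal" algebra spanned by the projections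
  set D : (N → ℝ) → Matrix m m ℂ := fun c => ∑ ν, (c ν : ℂ) • P ν with hDdef
  have hD1 : D 1 = 1 := by
    simp only [hDdef, Pi.one_apply, Complex.ofReal_one, one_smul]
    exact hP1
  have hDmul : ∀ c d, D c * D d = D (c * d) := by
    intro c d
    simp only [hDdef]
    rw [Finset.sum_mul_sum]
    have hterm : ∀ ν ν', ((c ν : ℂ) • P ν) * ((d ν' : ℂ) • P ν') =
        if ν = ν' then ((c ν * d ν' : ℝ) : ℂ) • P ν else 0 := by
      intro ν ν'
      rw [Matrix.smul_mul, Matrix.mul_smul, horth, smul_smul]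
      by_cases h : ν = ν'
      · rw [if_pos h, if_pos h]; push_cast; ring_nf
      · rw [if_neg h, if_neg h, smul_zero]
    calc ∑ ν, ∑ ν', ((c ν : ℂ) • P ν) * ((d ν' : ℂ) • P ν')
        = ∑ ν, ∑ ν', if ν = ν' then ((c ν * d ν' : ℝ) : ℂ) • P ν else 0 := by
          exact Finset.sum_congr rfl fun ν _ => Finset.sum_congr rfl fun ν' _ => hterm ν ν'
      _ = ∑ ν, ((c ν * d ν : ℝ) : ℂ) • P ν := by
          refine Finset.sum_congr rfl fun ν _ => ?_
          rw [Finset.sum_ite_eq (Finset.univ) ν (fun ν' => ((c ν * d ν' : ℝ) : ℂ) • P ν)]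
          simp
      _ = ∑ ν, ((c * d) ν : ℂ) • P ν := by rfl
  have hDherm : ∀ c, (D c)ᴴ = D c := by
    intro c
    simp only [hDdef, conjTranspose_sum, conjTranspose_smul]
    refine Finset.sum_congr rfl fun ν _ => ?_
    rw [hherm]
    congr 1
    exact Complex.conj_ofReal _
  have hDcomm : ∀ c d, D c * D d = D d * D c := by
    intro c d; rw [hDmul, hDmul, mul_comm]
  -- separating measurement labels
  have hex : ∀ ν μ : N, ν ≠ μ → ∃ ξ, p ξ ν ≠ p ξ μ := by
    intro ν μ h
    by_contra hcon
    push_neg at hcon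
    exact h (hjoint ν μ hcon)
  set f : N → N → (N → ℝ) := fun ν μ κ =>
    if h : ν = μ then 1 else
      (p (hex ν μ h).choose ν - p (hex ν μ h).choose μ)⁻¹ *
        (p (hex ν μ h).choose κ - p (hex ν μ h).choose μ) with hfdef
  have hffix : ∀ ν μ, T (D (f ν μ)) = D (f ν μ) := by
    intro ν μ
    by_cases h : ν = μ
    · have h1 : f ν μ = 1 := by funext κ; simp [hfdef, h]
      rw [h1, hD1, hT1]
    · set ξ0 := (hex ν μ h).choose with hξ0
      have hstep : Φ ξ0 1 - ((p ξ0 μ : ℂ)) • 1 = ∑ κ, ((p ξ0 κ - p ξ0 μ : ℝ) : ℂ) • P κ := by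
        rw [hspec ξ0, ← hP1, Finset.smul_sum, ← Finset.sum_sub_distrib]
        refine Finset.sum_congr rfl fun κ _ => ?_
        rw [← sub_smul]
        push_cast
        ring_nf
      have hDf : D (f ν μ) = (((p ξ0 ν - p ξ0 μ)⁻¹ : ℝ) : ℂ) •
          (Φ ξ0 1 - ((p ξ0 μ : ℂ)) • 1) := by
        rw [hstep, Finset.smul_sum]
        simp only [hDdef]
        refine Finset.sum_congr rfl fun κ _ => ?_
        rw [smul_smul]
        have hf : f ν μ κ = (p ξ0 ν - p ξ0 μ)⁻¹ * (p ξ0 κ - p ξ0 μ) := by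
          simp only [hfdef, dif_neg h]
          rfl
        rw [hf]
        congr 1
        push_cast
        ring
      rw [hDf, _root_.map_smul, map_sub, hAfix, _root_.map_smul, hT1]
  -- fixed points: products of the interpolating elements
  have hprod : ∀ (ν : N) (s : Finset N), T (D (∏ μ ∈ s, f ν μ)) = D (∏ μ ∈ s, f ν μ) := by
    intro ν s
    induction s using Finset.induction_on with
    | empty => rw [Finset.prod_empty, hD1, hT1]
    | insert _ _ ha ih =>
      rw [Finset.prod_insert ha, ← hDmul]
      exact hfix_mul _ _ (hDherm _) (hDherm _) (hDcomm _ _) (hffix ν _) ih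
  -- each P ν is a fixed point of T
  have hPfix : ∀ ν, T (P ν) = P ν := by
    intro ν
    have hval : D (∏ μ, f ν μ) = P ν := by
      have hc : ∀ κ, (∏ μ, f ν μ) κ = if κ = ν then 1 else 0 := by
        intro κ
        rw [Finset.prod_apply]
        by_cases hκ : κ = ν
        · subst hκ
          rw [if_pos rfl]
          refine Finset.prod_eq_one fun μ _ => ?_
          by_cases h : κ = μ
          · simp [hfdef, h]
          · have hne := (hex κ μ h).choose_spec
            simp only [hfdef, dif_neg h]
            exact inv_mul_cancel₀ (sub_ne_zero.mpr hne)
        · rw [if_neg hκ]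
          refine Finset.prod_eq_zero (Finset.mem_univ κ) ?_
          have h : ν ≠ κ := fun hh => hκ hh.symm
          simp only [hfdef, dif_neg h]
          rw [sub_self, mul_zero]
      simp only [hDdef, hc]
      have hterm : ∀ κ, (((if κ = ν then 1 else 0 : ℝ)) : ℂ) • P κ =
          if κ = ν then P κ else 0 := by
        intro κ; split <;> simp
      rw [Finset.sum_congr rfl fun κ _ => hterm κ]
      simp
    rw [← hval]
    exact hprod ν Finset.univ
  -- projections are positive semidefinite
  have hPpsd : ∀ ν, (P ν).PosSemidef := by
    intro ν
    have h : P ν = (P ν)ᴴ * P ν := by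
      rw [hherm]
      rw [horth]
      simp
    rw [h]
    exact Matrix.posSemidef_conjTranspose_mul_self _
  -- ∑ over ξ of Φ ξ (P ν) is P ν
  have hsumP : ∀ ν, ∑ ξ, Φ ξ (P ν) = P ν := by
    intro ν
    rw [← hTapp]
    exact hPfix ν
  -- sandwich: Φ ξ (P μ) is supported on P μ
  have hsand : ∀ ξ μ, Φ ξ (P μ) = P μ * Φ ξ (P μ) * P μ := by
    intro ξ μ
    have hidem : P μ * P μ = P μ := by rw [horth]; simp
    refine SpecAux.sandwich (hherm μ) hidem (SpecAux.cp_pos (hCP ξ) (hPpsd μ)) ?_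
    have hrest : P μ - Φ ξ (P μ) = ∑ ξ' ∈ Finset.univ.erase ξ, Φ ξ' (P μ) := by
      rw [Finset.sum_erase_eq_sub (Finset.mem_univ ξ), hsumP]
    rw [hrest]
    exact SpecAux.psd_sum _ _ fun ξ' _ => SpecAux.cp_pos (hCP ξ') (hPpsd μ)
  -- Main identity
  have hmain : ∀ ξ ν, Φ ξ (P ν) = (p ξ ν : ℂ) • P ν := by
    intro ξ ν
    have hone : Φ ξ 1 = ∑ μ, Φ ξ (P μ) := by rw [← map_sum, hP1]
    have hkey : P ν * Φ ξ 1 * P ν = Φ ξ (P ν) := by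
      rw [hone, Finset.mul_sum, Finset.sum_mul]
      rw [Finset.sum_eq_single ν]
      · exact (hsand ξ ν).symm
      · intro μ _ hμν
        rw [hsand ξ μ, ← Matrix.mul_assoc, ← Matrix.mul_assoc, horth]
        rw [if_neg (fun hh => hμν hh.symm)]
        simp
      · intro h; exact absurd (Finset.mem_univ ν) h
    have hval : P ν * Φ ξ 1 * P ν = (p ξ ν : ℂ) • P ν := by
      rw [hspec ξ, Finset.mul_sum, Finset.sum_mul]
      rw [Finset.sum_eq_single ν]
      · simp [Matrix.mul_smul, Matrix.smul_mul, Matrix.mul_assoc, horth]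
      · intro μ _ hμν
        simp [Matrix.mul_smul, Matrix.smul_mul, Matrix.mul_assoc, horth,
          fun hh => hμν (Eq.symm hh), if_neg]
        intro hcon
        exact absurd hcon.symm hμν
      · intro h; exact absurd (Finset.mem_univ ν) h
    rw [← hkey, hval]
  -- trace of projections is a positive real
  have htrP : ∀ ν, 0 < ((P ν).trace).re ∧ ((P ν).trace).im = 0 := by
    intro ν
    have h1 := SpecAux.psd_trace_nonneg (hPpsd ν)
    have h2 : (P ν).trace ≠ 0 := fun h => hPne ν (SpecAux.psd_trace_eq_zero (hPpsd ν) h)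
    rw [Complex.le_def] at h1
    simp only [Complex.zero_re, Complex.zero_im] at h1
    refine ⟨lt_of_le_of_ne h1.1 ?_, h1.2.symm⟩
    intro hre
    apply h2
    apply Complex.ext
    · exact hre.symm
    · exact h1.2.symm
  refine ⟨hmain, ?_, ?_, ?_⟩
  · -- nonnegativity
    intro ξ ν
    have hpsd := SpecAux.cp_pos (hCP ξ) (hPpsd ν)
    rw [hmain ξ ν] at hpsd
    have htr := SpecAux.psd_trace_nonneg hpsd
    rw [Matrix.trace_smul] at htr
    rw [Complex.le_def] at htr
    simp only [Complex.zero_re, Complex.zero_im] at htr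
    have hre : ((p ξ ν : ℂ) • (P ν).trace).re = p ξ ν * ((P ν).trace).re := by
      simp [Complex.ofReal_mul, (htrP ν).2]
    rw [hre] at htr
    have := htr.1
    exact nonneg_of_mul_nonneg_right (by rwa [mul_comm] at this) (htrP ν).1
  · -- normalization
    intro ν
    have h1 : (∑ ξ, (p ξ ν : ℂ)) • P ν = P ν := by
      rw [Finset.sum_smul]
      calc ∑ ξ, (p ξ ν : ℂ) • P ν = ∑ ξ, Φ ξ (P ν) :=
            Finset.sum_congr rfl fun ξ _ => (hmain ξ ν).symm
        _ = P ν := hsumP ν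
    have h2 : ((∑ ξ, (p ξ ν : ℂ)) - 1) • P ν = 0 := by
      rw [sub_smul, h1, one_smul, sub_self]
    rcases smul_eq_zero.mp h2 with h3 | h3
    · have h4 : (∑ ξ, (p ξ ν : ℂ)) = 1 := by
        have := sub_eq_zero.mp h3
        exact this
      have : ((∑ ξ, p ξ ν : ℝ) : ℂ) = ((1 : ℝ) : ℂ) := by
        push_cast
        rw [h4]
      exact_mod_cast this
    · exact absurd h3 (hPne ν)
  · -- distinctness
    intro ν ν' h
    by_contra hcon
    push_neg at hcon
    exact h (hjoint ν ν' hcon)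
end
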